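/- arXiv:1707.08112 — 9 statements merged into one kernel-verified Lean document; each statement's English description precedes it below -/
import Mathlib

section
/- Let ε, δ be real parameters and let (q,p) ∈ ℝ² satisfy ε² − q² ≠ 0. Define p̄ = p + 2εδq/(ε² − q²), and assume ε² − p̄² ≠ 0; define q̄ = q − 2εδp̄/(ε² − p̄²). Then the function I(q,p) = p²q² − ε²(p² + q²) − 2εδpq is invariant under this map: I(q̄, p̄) = I(q, p). -/
noncomputable section

/-- The invariant of the one-degree-of-freedom KdV map:
`I(q,p) = p²q² − ε²(p² + q²) − 2εδpq`. -/
def KdVinv (ε δ q p : ℝ) : ℝ :=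
  p ^ 2 * q ^ 2 - ε ^ 2 * (p ^ 2 + q ^ 2) - 2 * ε * δ * p * q

lemma kdv_step1 (ε δ q p : ℝ) (h1 : ε ^ 2 - q ^ 2 ≠ 0) (pbar : ℝ)
    (hpbar : pbar = p + 2 * ε * δ * q / (ε ^ 2 - q ^ 2)) :
    KdVinv ε δ q pbar = KdVinv ε δ q p - 4 * ε * δ * q * pbar := by
  subst hpbar
  unfold KdVinv
  field_simp
  ring

lemma kdv_step2 (ε δ q pbar : ℝ) (h2 : ε ^ 2 - pbar ^ 2 ≠ 0) (qbar : ℝ)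
    (hqbar : qbar = q - 2 * ε * δ * pbar / (ε ^ 2 - pbar ^ 2)) :
    KdVinv ε δ qbar pbar = KdVinv ε δ q pbar + 4 * ε * δ * pbar * q := by
  subst hqbar
  unfold KdVinv
  field_simp
  ring

/-- The function `I(q,p) = p²q² − ε²(p²+q²) − 2εδpq` is invariant under the
one-degree-of-freedom KdV map `p̄ = p + 2εδq/(ε²−q²)`, `q̄ = q − 2εδp̄/(ε²−p̄²)`. -/
theorem kdv_map_invariant (ε δ q p : ℝ) (h1 : ε ^ 2 - q ^ 2 ≠ 0)
    (pbar : ℝ) (hpbar : pbar = p + 2 * ε * δ * q / (ε ^ 2 - q ^ 2))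
    (h2 : ε ^ 2 - pbar ^ 2 ≠ 0)
    (qbar : ℝ) (hqbar : qbar = q - 2 * ε * δ * pbar / (ε ^ 2 - pbar ^ 2)) :
    KdVinv ε δ qbar pbar = KdVinv ε δ q p := by
  rw [kdv_step2 ε δ q pbar h2 qbar hqbar, kdv_step1 ε δ q p h1 pbar hpbar]
  ring
end
end

section
/- Let ε, δ be real parameters and define H(q, p̄) = εδ·log(ε² − p̄²) + εδ·log(ε² − q²) on the region where ε² − q² > 0 and ε² − p̄² > 0. Then the KdV map of one degree of freedom, p̄ = p + 2εδq/(ε² − q²), q̄ = q − 2εδp̄/(ε² − p̄²), satisfies the discrete Hamilton equations p̄ − p = −∂H/∂q (q, p̄) and q̄ − q = ∂H/∂p̄ (q, p̄); that is, H is a generating function of the map, so the map is a canonical transformation. -/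
noncomputable section

/-- The discrete Hamiltonian (generating function) of the one-degree-of-freedom KdV map:
`H(q,p̄) = εδ·log(ε² − p̄²) + εδ·log(ε² − q²)`. -/
def kdvH (ε δ : ℝ) (q pbar : ℝ) : ℝ :=
  ε * δ * Real.log (ε ^ 2 - pbar ^ 2) + ε * δ * Real.log (ε ^ 2 - q ^ 2)

lemma logpart_hasDerivAt (ε δ x : ℝ) (hx : ε ^ 2 - x ^ 2 > 0) :
    HasDerivAt (fun s : ℝ => ε * δ * Real.log (ε ^ 2 - s ^ 2))
      (ε * δ * (-(2 * x) / (ε ^ 2 - x ^ 2))) x := by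
  have h1 : HasDerivAt (fun s : ℝ => ε ^ 2 - s ^ 2) (-(2 * x)) x := by
    simpa [Pi.sub_def] using (hasDerivAt_const x (ε ^ 2)).sub (hasDerivAt_pow 2 x)
  exact ((h1.log hx.ne').const_mul (ε * δ)).congr_deriv (by ring)

/-- The one-degree-of-freedom KdV map satisfies the discrete Hamilton equations
`p̄ − p = −∂H/∂q (q,p̄)` and `q̄ − q = ∂H/∂p̄ (q,p̄)` generated by
`H(q,p̄) = εδ log(ε²−p̄²) + εδ log(ε²−q²)`, on the region where
`ε² − q² > 0` and `ε² − p̄² > 0`. -/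
theorem kdv_map_discrete_hamilton (ε δ q p : ℝ)
    (hq : ε ^ 2 - q ^ 2 > 0)
    (pbar : ℝ) (hpbar : pbar = p + 2 * ε * δ * q / (ε ^ 2 - q ^ 2))
    (hp : ε ^ 2 - pbar ^ 2 > 0)
    (qbar : ℝ) (hqbar : qbar = q - 2 * ε * δ * pbar / (ε ^ 2 - pbar ^ 2)) :
    pbar - p = -(deriv (fun s => kdvH ε δ s pbar) q) ∧
    qbar - q = deriv (fun s => kdvH ε δ q s) pbar := by
  have d1 : deriv (fun s => kdvH ε δ s pbar) q
      = ε * δ * (-(2 * q) / (ε ^ 2 - q ^ 2)) := by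
    have := ((hasDerivAt_const q (ε * δ * Real.log (ε ^ 2 - pbar ^ 2))).add
      (logpart_hasDerivAt ε δ q hq))
    simpa only [kdvH, Pi.add_def, zero_add] using this.deriv
  have d2 : deriv (fun s => kdvH ε δ q s) pbar
      = ε * δ * (-(2 * pbar) / (ε ^ 2 - pbar ^ 2)) := by
    have := ((logpart_hasDerivAt ε δ pbar hp).add
      (hasDerivAt_const pbar (ε * δ * Real.log (ε ^ 2 - q ^ 2))))
    simpa only [kdvH, Pi.add_def, add_zero] using this.deriv
  constructor
  · rw [d1, hpbar]; field_simp; ring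
  · rw [d2, hqbar]; field_simp; ring
end
end

section
/- Let ε, δ be real parameters and consider the two-degrees-of-freedom KdV map: p̄₁ = p₁ + εδ/(ε−q₁) − εδ/(ε+q₁+q₂), p̄₂ = p₂ + εδ/(ε−q₂) − εδ/(ε+q₁+q₂), q̄₁ = q₁ − εδ/(ε−p̄₁) + εδ/(ε+p̄₁−p̄₂), q̄₂ = q₂ + εδ/(ε+p̄₂) − εδ/(ε+p̄₁−p̄₂), defined wherever all denominators are nonzero. Then the function 𝒫₂(q₁,q₂,p₁,p₂) = δε·[x₁(y₀−y₁) + x₂(y₂−y₀) + x₃(y₁−y₂)] + x₁x₂y₀(y₁+y₂) + x₁x₃y₁(y₀+y₂) + x₂x₃y₂(y₀+y₁), with x₁ = ε−p₁, x₂ = ε+p₂, x₃ = ε+p₁−p₂, y₀ = ε+q₁+q₂, y₁ = ε−q₁, y₂ = ε−q₂, is invariant under this map: 𝒫₂(q̄₁,q̄₂,p̄₁,p̄₂) = 𝒫₂(q₁,q₂,p₁,p₂). -/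
noncomputable section

/-- The second invariant `𝒫₂` of the two-degrees-of-freedom KdV map, in the
abbreviations `x₁ = ε−p₁`, `x₂ = ε+p₂`, `x₃ = ε+p₁−p₂`, `y₀ = ε+q₁+q₂`,
`y₁ = ε−q₁`, `y₂ = ε−q₂`. -/
def kdv2P2 (ε δ q1 q2 p1 p2 : ℝ) : ℝ :=
  let x1 := ε - p1; let x2 := ε + p2; let x3 := ε + p1 - p2
  let y0 := ε + q1 + q2; let y1 := ε - q1; let y2 := ε - q2
  δ * ε * (x1 * (y0 - y1) + x2 * (y2 - y0) + x3 * (y1 - y2)) +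
    x1 * x2 * y0 * (y1 + y2) + x1 * x3 * y1 * (y0 + y2) + x2 * x3 * y2 * (y0 + y1)

lemma kdv2P2_eq (ε δ q1 q2 p1 p2 : ℝ) :
    kdv2P2 ε δ q1 q2 p1 p2 =
      δ * ε * ((ε - p1) * ((ε + q1 + q2) - (ε - q1)) + (ε + p2) * ((ε - q2) - (ε + q1 + q2))
          + (ε + p1 - p2) * ((ε - q1) - (ε - q2))) +
        (ε - p1) * (ε + p2) * (ε + q1 + q2) * ((ε - q1) + (ε - q2)) +
        (ε - p1) * (ε + p1 - p2) * (ε - q1) * ((ε + q1 + q2) + (ε - q2)) +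
        (ε + p2) * (ε + p1 - p2) * (ε - q2) * ((ε + q1 + q2) + (ε - q1)) := rfl

set_option maxHeartbeats 1600000 in
/-- First half-step: updating `p` with `q` fixed. -/
lemma kdv2_halfA (ε δ q1 q2 p1 p2 : ℝ)
    (h1 : ε - q1 ≠ 0) (h2 : ε - q2 ≠ 0) (h3 : ε + q1 + q2 ≠ 0)
    (pbar1 : ℝ)
    (hpbar1 : pbar1 = p1 + ε * δ / (ε - q1) - ε * δ / (ε + q1 + q2))
    (pbar2 : ℝ)
    (hpbar2 : pbar2 = p2 + ε * δ / (ε - q2) - ε * δ / (ε + q1 + q2)) :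
    kdv2P2 ε δ q1 q2 pbar1 pbar2 + 6 * ε * δ * (q1 * pbar1 + q2 * pbar2)
      = kdv2P2 ε δ q1 q2 p1 p2 := by
  have ha : ε * δ / (ε - q1) * (ε - q1) = ε * δ := div_mul_cancel₀ _ h1
  have hb : ε * δ / (ε + q1 + q2) * (ε + q1 + q2) = ε * δ := div_mul_cancel₀ _ h3
  have hc : ε * δ / (ε - q2) * (ε - q2) = ε * δ := div_mul_cancel₀ _ h2
  have hY : ((ε - q1) * (ε + q1 + q2) * (ε - q2))^2 ≠ 0 :=
    pow_ne_zero _ (mul_ne_zero (mul_ne_zero h1 h3) h2)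
  subst hpbar1 hpbar2
  rw [kdv2P2_eq, kdv2P2_eq]
  apply mul_right_cancel₀ hY
  linear_combination (exp := 1)
    ((-2)*q1^2*q2^5*p2 + (-4)*q1^3*q2^4*p2 + (-2)*q1^3*q2^4*p1 + (-2)*q1^4*q2^3*p2 + (-4)*q1^4*q2^3*p1 + (-2)*q1^5*q2^2*p1 + 4*ε*q1*q2^5*p2 + 10*ε*q1^2*q2^4*p2 + (-2)*ε*q1^2*q2^5 + 12*ε*q1^3*q2^3*p2 + (-5)*ε*q1^3*q2^4 + 6*ε*q1^4*q2^2*p2 + 4*ε*q1^4*q2^2*p1 + (-4)*ε*q1^4*q2^3 + 4*ε*q1^5*q2*p1 + (-1)*ε*q1^5*q2^2 + (-2)*ε*δ*q1^2*q2^4 + (-4)*ε*δ*q1^3*q2^3 + (-2)*ε*δ*q1^4*q2^2 + (-2)*ε^2*q2^5*p2 + (-8)*ε^2*q1*q2^4*p2 + 6*ε^2*q1*q2^4*p1 + 4*ε^2*q1*q2^5 + (-14)*ε^2*q1^2*q2^3*p2 + 12*ε^2*q1^2*q2^3*p1 + 10*ε^2*q1^2*q2^4 + (-12)*ε^2*q1^3*q2^2*p2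 + 10*ε^2*q1^3*q2^2*p1 + 12*ε^2*q1^3*q2^3 + (-6)*ε^2*q1^4*q2*p2 + 4*ε^2*q1^4*q2*p1 + 8*ε^2*q1^4*q2^2 + (-2)*ε^2*q1^5*p1 + 2*ε^2*q1^5*q2 + 4*ε^2*δ*q1*q2^4 + 8*ε^2*δ*q1^2*q2^3 + 8*ε^2*δ*q1^3*q2^2 + 4*ε^2*δ*q1^4*q2 + 2*ε^3*q2^4*p2 + (-4)*ε^3*q2^4*p1 + (-2)*ε^3*q2^5 + (-8)*ε^3*q1*q2^3*p1 + (-5)*ε^3*q1*q2^4 + 2*ε^3*q1^2*q2^2*p2 + (-16)*ε^3*q1^2*q2^2*p1 + (-8)*ε^3*q1^2*q2^3 + 4*ε^3*q1^3*q2*p2 + (-12)*ε^3*q1^3*q2*p1 + (-7)*ε^3*q1^3*q2^2 + 2*ε^3*q1^4*p2 + (-4)*ε^3*q1^4*p1 + (-4)*ε^3*q1^4*q2 + (-1)*ε^3*q1^5 + (-2)*ε^3*δ*q2^4 + (-4)*ε^3*δ*q1*q2^3 + (-6)*ε^3*δ*q1^2*q2^2 + (-4)*ε^3*δ*q1^3*q2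 + (-2)*ε^3*δ*q1^4 + 4*ε^4*q2^3*p2 + 8*ε^4*q1*q2^2*p2 + (-4)*ε^4*q1*q2^2*p1 + (-4)*ε^4*q1*q2^3 + 8*ε^4*q1^2*q2*p2 + (-4)*ε^4*q1^2*q2*p1 + (-6)*ε^4*q1^2*q2^2 + 4*ε^4*q1^3*p1 + (-2)*ε^4*q1^3*q2 + (-4)*ε^4*δ*q1*q2^2 + (-4)*ε^4*δ*q1^2*q2 + (-4)*ε^5*q2^2*p2 + 8*ε^5*q2^2*p1 + 4*ε^5*q2^3 + (-4)*ε^5*q1*q2*p2 + 8*ε^5*q1*q2*p1 + 6*ε^5*q1*q2^2 + (-4)*ε^5*q1^2*p2 + 8*ε^5*q1^2*p1 + 6*ε^5*q1^2*q2 + 2*ε^5*q1^3 + 4*ε^5*δ*q2^2 + 4*ε^5*δ*q1*q2 + 4*ε^5*δ*q1^2 + (-2)*ε^6*q2*p2 + (-2)*ε^6*q1*p1 + 2*ε^7*p2 + (-4)*ε^7*p1 + (-2)*ε^7*q2 + (-1)*ε^7*q1 + (-2)*ε^7*δ + (-2)*(ε*δ/(ε-q2))*q1^2*q2^5 + (-4)*(ε*δ/(ε-q2))*q1^3*q2^4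 + (-2)*(ε*δ/(ε-q2))*q1^4*q2^3 + 4*(ε*δ/(ε-q2))*ε*q1*q2^5 + 10*(ε*δ/(ε-q2))*ε*q1^2*q2^4 + 12*(ε*δ/(ε-q2))*ε*q1^3*q2^3 + 6*(ε*δ/(ε-q2))*ε*q1^4*q2^2 + (-2)*(ε*δ/(ε-q2))*ε^2*q2^5 + (-8)*(ε*δ/(ε-q2))*ε^2*q1*q2^4 + (-14)*(ε*δ/(ε-q2))*ε^2*q1^2*q2^3 + (-12)*(ε*δ/(ε-q2))*ε^2*q1^3*q2^2 + (-6)*(ε*δ/(ε-q2))*ε^2*q1^4*q2 + 2*(ε*δ/(ε-q2))*ε^3*q2^4 + 2*(ε*δ/(ε-q2))*ε^3*q1^2*q2^2 + 4*(ε*δ/(ε-q2))*ε^3*q1^3*q2 + 2*(ε*δ/(ε-q2))*ε^3*q1^4 + 4*(ε*δ/(ε-q2))*ε^4*q2^3 + 8*(ε*δ/(ε-q2))*ε^4*q1*q2^2 + 8*(ε*δ/(ε-q2))*ε^4*q1^2*q2 + (-4)*(ε*δ/(ε-q2))*ε^5*q2^2 + (-4)*(ε*δ/(ε-q2))*ε^5*q1*q2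 + (-4)*(ε*δ/(ε-q2))*ε^5*q1^2 + (-2)*(ε*δ/(ε-q2))*ε^6*q2 + 2*(ε*δ/(ε-q2))*ε^7 + 2*(ε*δ/(ε+q1+q2))*q1^2*q2^5 + 6*(ε*δ/(ε+q1+q2))*q1^3*q2^4 + 6*(ε*δ/(ε+q1+q2))*q1^4*q2^3 + 2*(ε*δ/(ε+q1+q2))*q1^5*q2^2 + (-4)*(ε*δ/(ε+q1+q2))*ε*q1*q2^5 + (-10)*(ε*δ/(ε+q1+q2))*ε*q1^2*q2^4 + (-12)*(ε*δ/(ε+q1+q2))*ε*q1^3*q2^3 + (-10)*(ε*δ/(ε+q1+q2))*ε*q1^4*q2^2 + (-4)*(ε*δ/(ε+q1+q2))*ε*q1^5*q2 + 2*(ε*δ/(ε+q1+q2))*ε^2*q2^5 + 2*(ε*δ/(ε+q1+q2))*ε^2*q1*q2^4 + 2*(ε*δ/(ε+q1+q2))*ε^2*q1^2*q2^3 + 2*(ε*δ/(ε+q1+q2))*ε^2*q1^3*q2^2 + 2*(ε*δ/(ε+q1+q2))*ε^2*q1^4*q2 + 2*(ε*δ/(ε+q1+q2))*ε^2*q1^5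 + 2*(ε*δ/(ε+q1+q2))*ε^3*q2^4 + 8*(ε*δ/(ε+q1+q2))*ε^3*q1*q2^3 + 14*(ε*δ/(ε+q1+q2))*ε^3*q1^2*q2^2 + 8*(ε*δ/(ε+q1+q2))*ε^3*q1^3*q2 + 2*(ε*δ/(ε+q1+q2))*ε^3*q1^4 + (-4)*(ε*δ/(ε+q1+q2))*ε^4*q2^3 + (-4)*(ε*δ/(ε+q1+q2))*ε^4*q1*q2^2 + (-4)*(ε*δ/(ε+q1+q2))*ε^4*q1^2*q2 + (-4)*(ε*δ/(ε+q1+q2))*ε^4*q1^3 + (-4)*(ε*δ/(ε+q1+q2))*ε^5*q2^2 + (-4)*(ε*δ/(ε+q1+q2))*ε^5*q1*q2 + (-4)*(ε*δ/(ε+q1+q2))*ε^5*q1^2 + 2*(ε*δ/(ε+q1+q2))*ε^6*q2 + 2*(ε*δ/(ε+q1+q2))*ε^6*q1 + 2*(ε*δ/(ε+q1+q2))*ε^7 + (-1)*(ε*δ/(ε-q1))*q1^3*q2^4 + (-2)*(ε*δ/(ε-q1))*q1^4*q2^3 + (-1)*(ε*δ/(ε-q1))*q1^5*q2^2 + 2*(ε*δ/(ε-q1))*ε*q1^4*q2^2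 + 2*(ε*δ/(ε-q1))*ε*q1^5*q2 + 3*(ε*δ/(ε-q1))*ε^2*q1*q2^4 + 6*(ε*δ/(ε-q1))*ε^2*q1^2*q2^3 + 5*(ε*δ/(ε-q1))*ε^2*q1^3*q2^2 + 2*(ε*δ/(ε-q1))*ε^2*q1^4*q2 + (-1)*(ε*δ/(ε-q1))*ε^2*q1^5 + (-2)*(ε*δ/(ε-q1))*ε^3*q2^4 + (-4)*(ε*δ/(ε-q1))*ε^3*q1*q2^3 + (-8)*(ε*δ/(ε-q1))*ε^3*q1^2*q2^2 + (-6)*(ε*δ/(ε-q1))*ε^3*q1^3*q2 + (-2)*(ε*δ/(ε-q1))*ε^3*q1^4 + (-2)*(ε*δ/(ε-q1))*ε^4*q1*q2^2 + (-2)*(ε*δ/(ε-q1))*ε^4*q1^2*q2 + 2*(ε*δ/(ε-q1))*ε^4*q1^3 + 4*(ε*δ/(ε-q1))*ε^5*q2^2 + 4*(ε*δ/(ε-q1))*ε^5*q1*q2 + 4*(ε*δ/(ε-q1))*ε^5*q1^2 + (-1)*(ε*δ/(ε-q1))*ε^6*q1 + (-2)*(ε*δ/(ε-q1))*ε^7)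 * ha +
    ((-2)*q1^2*q2^5*p2 + (-4)*q1^3*q2^4*p2 + (-2)*q1^3*q2^4*p1 + (-2)*q1^4*q2^3*p2 + (-4)*q1^4*q2^3*p1 + (-2)*q1^5*q2^2*p1 + 4*ε*q1*q2^5*p2 + 10*ε*q1^2*q2^4*p2 + 6*ε*q1^2*q2^4*p1 + 1*ε*q1^2*q2^5 + 12*ε*q1^3*q2^3*p2 + 12*ε*q1^3*q2^3*p1 + 1*ε*q1^3*q2^4 + 6*ε*q1^4*q2^2*p2 + 10*ε*q1^4*q2^2*p1 + (-1)*ε*q1^4*q2^3 + 4*ε*q1^5*q2*p1 + (-1)*ε*q1^5*q2^2 + (-2)*ε^2*q2^5*p2 + (-8)*ε^2*q1*q2^4*p2 + (-6)*ε^2*q1*q2^4*p1 + (-2)*ε^2*q1*q2^5 + (-14)*ε^2*q1^2*q2^3*p2 + (-12)*ε^2*q1^2*q2^3*p1 + (-2)*ε^2*q1^2*q2^4 + (-12)*ε^2*q1^3*q2^2*p2 + (-14)*ε^2*q1^3*q2^2*p1 + (-6)*ε^2*q1^4*q2*p2 + (-8)*ε^2*q1^4*q2*p1 + 2*ε^2*q1^4*q2^2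 + (-2)*ε^2*q1^5*p1 + 2*ε^2*q1^5*q2 + 2*ε^3*q2^4*p2 + 2*ε^3*q2^4*p1 + 1*ε^3*q2^5 + 4*ε^3*q1*q2^3*p1 + 1*ε^3*q1*q2^4 + 2*ε^3*q1^2*q2^2*p2 + 2*ε^3*q1^2*q2^2*p1 + 1*ε^3*q1^2*q2^3 + 4*ε^3*q1^3*q2*p2 + (-1)*ε^3*q1^3*q2^2 + 2*ε^3*q1^4*p2 + 2*ε^3*q1^4*p1 + (-1)*ε^3*q1^4*q2 + (-1)*ε^3*q1^5 + 4*ε^4*q2^3*p2 + 8*ε^4*q1*q2^2*p2 + 8*ε^4*q1*q2^2*p1 + 2*ε^4*q1*q2^3 + 8*ε^4*q1^2*q2*p2 + 8*ε^4*q1^2*q2*p1 + 4*ε^4*q1^3*p1 + (-2)*ε^4*q1^3*q2 + (-4)*ε^5*q2^2*p2 + (-4)*ε^5*q2^2*p1 + (-2)*ε^5*q2^3 + (-4)*ε^5*q1*q2*p2 + (-4)*ε^5*q1*q2*p1 + (-4)*ε^5*q1^2*p2 + (-4)*ε^5*q1^2*p1 + 2*ε^5*q1^3 + (-2)*ε^6*q2*p2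 + (-2)*ε^6*q1*p1 + 2*ε^7*p2 + 2*ε^7*p1 + 1*ε^7*q2 + (-1)*ε^7*q1 + (-2)*(ε*δ/(ε-q2))*q1^2*q2^5 + (-4)*(ε*δ/(ε-q2))*q1^3*q2^4 + (-2)*(ε*δ/(ε-q2))*q1^4*q2^3 + 4*(ε*δ/(ε-q2))*ε*q1*q2^5 + 10*(ε*δ/(ε-q2))*ε*q1^2*q2^4 + 12*(ε*δ/(ε-q2))*ε*q1^3*q2^3 + 6*(ε*δ/(ε-q2))*ε*q1^4*q2^2 + (-2)*(ε*δ/(ε-q2))*ε^2*q2^5 + (-8)*(ε*δ/(ε-q2))*ε^2*q1*q2^4 + (-14)*(ε*δ/(ε-q2))*ε^2*q1^2*q2^3 + (-12)*(ε*δ/(ε-q2))*ε^2*q1^3*q2^2 + (-6)*(ε*δ/(ε-q2))*ε^2*q1^4*q2 + 2*(ε*δ/(ε-q2))*ε^3*q2^4 + 2*(ε*δ/(ε-q2))*ε^3*q1^2*q2^2 + 4*(ε*δ/(ε-q2))*ε^3*q1^3*q2 + 2*(ε*δ/(ε-q2))*ε^3*q1^4 + 4*(ε*δ/(ε-q2))*ε^4*q2^3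 + 8*(ε*δ/(ε-q2))*ε^4*q1*q2^2 + 8*(ε*δ/(ε-q2))*ε^4*q1^2*q2 + (-4)*(ε*δ/(ε-q2))*ε^5*q2^2 + (-4)*(ε*δ/(ε-q2))*ε^5*q1*q2 + (-4)*(ε*δ/(ε-q2))*ε^5*q1^2 + (-2)*(ε*δ/(ε-q2))*ε^6*q2 + 2*(ε*δ/(ε-q2))*ε^7 + 1*(ε*δ/(ε+q1+q2))*q1^2*q2^5 + 3*(ε*δ/(ε+q1+q2))*q1^3*q2^4 + 3*(ε*δ/(ε+q1+q2))*q1^4*q2^3 + 1*(ε*δ/(ε+q1+q2))*q1^5*q2^2 + (-2)*(ε*δ/(ε+q1+q2))*ε*q1*q2^5 + (-8)*(ε*δ/(ε+q1+q2))*ε*q1^2*q2^4 + (-12)*(ε*δ/(ε+q1+q2))*ε*q1^3*q2^3 + (-8)*(ε*δ/(ε+q1+q2))*ε*q1^4*q2^2 + (-2)*(ε*δ/(ε+q1+q2))*ε*q1^5*q2 + 1*(ε*δ/(ε+q1+q2))*ε^2*q2^5 + 7*(ε*δ/(ε+q1+q2))*ε^2*q1*q2^4 + 13*(ε*δ/(ε+q1+q2))*ε^2*q1^2*q2^3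 + 13*(ε*δ/(ε+q1+q2))*ε^2*q1^3*q2^2 + 7*(ε*δ/(ε+q1+q2))*ε^2*q1^4*q2 + 1*(ε*δ/(ε+q1+q2))*ε^2*q1^5 + (-2)*(ε*δ/(ε+q1+q2))*ε^3*q2^4 + (-2)*(ε*δ/(ε+q1+q2))*ε^3*q1*q2^3 + (-2)*(ε*δ/(ε+q1+q2))*ε^3*q1^2*q2^2 + (-2)*(ε*δ/(ε+q1+q2))*ε^3*q1^3*q2 + (-2)*(ε*δ/(ε+q1+q2))*ε^3*q1^4 + (-2)*(ε*δ/(ε+q1+q2))*ε^4*q2^3 + (-8)*(ε*δ/(ε+q1+q2))*ε^4*q1*q2^2 + (-8)*(ε*δ/(ε+q1+q2))*ε^4*q1^2*q2 + (-2)*(ε*δ/(ε+q1+q2))*ε^4*q1^3 + 4*(ε*δ/(ε+q1+q2))*ε^5*q2^2 + 4*(ε*δ/(ε+q1+q2))*ε^5*q1*q2 + 4*(ε*δ/(ε+q1+q2))*ε^5*q1^2 + 1*(ε*δ/(ε+q1+q2))*ε^6*q2 + 1*(ε*δ/(ε+q1+q2))*ε^6*q1 + (-2)*(ε*δ/(ε+q1+q2))*ε^7)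 * hb +
    ((-2)*q1^2*q2^5*p2 + (-4)*q1^3*q2^4*p2 + (-2)*q1^3*q2^4*p1 + (-2)*q1^4*q2^3*p2 + (-4)*q1^4*q2^3*p1 + (-2)*q1^5*q2^2*p1 + 4*ε*q1*q2^5*p2 + 4*ε*q1^2*q2^4*p2 + 6*ε*q1^2*q2^4*p1 + 1*ε*q1^2*q2^5 + 12*ε*q1^3*q2^3*p1 + 4*ε*q1^3*q2^4 + 10*ε*q1^4*q2^2*p1 + 5*ε*q1^4*q2^3 + 4*ε*q1^5*q2*p1 + 2*ε*q1^5*q2^2 + 2*ε*δ*q1^2*q2^4 + 4*ε*δ*q1^3*q2^3 + 2*ε*δ*q1^4*q2^2 + (-2)*ε^2*q2^5*p2 + 4*ε^2*q1*q2^4*p2 + (-6)*ε^2*q1*q2^4*p1 + (-2)*ε^2*q1*q2^5 + 10*ε^2*q1^2*q2^3*p2 + (-12)*ε^2*q1^2*q2^3*p1 + (-8)*ε^2*q1^2*q2^4 + 12*ε^2*q1^3*q2^2*p2 + (-14)*ε^2*q1^3*q2^2*p1 + (-12)*ε^2*q1^3*q2^3 + 6*ε^2*q1^4*q2*p2 +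 (-8)*ε^2*q1^4*q2*p1 + (-10)*ε^2*q1^4*q2^2 + (-2)*ε^2*q1^5*p1 + (-4)*ε^2*q1^5*q2 + (-4)*ε^2*δ*q1*q2^4 + (-8)*ε^2*δ*q1^2*q2^3 + (-8)*ε^2*δ*q1^3*q2^2 + (-4)*ε^2*δ*q1^4*q2 + (-4)*ε^3*q2^4*p2 + 2*ε^3*q2^4*p1 + 1*ε^3*q2^5 + (-12)*ε^3*q1*q2^3*p2 + 4*ε^3*q1*q2^3*p1 + 4*ε^3*q1*q2^4 + (-16)*ε^3*q1^2*q2^2*p2 + 2*ε^3*q1^2*q2^2*p1 + 7*ε^3*q1^2*q2^3 + (-8)*ε^3*q1^3*q2*p2 + 8*ε^3*q1^3*q2^2 + (-4)*ε^3*q1^4*p2 + 2*ε^3*q1^4*p1 + 5*ε^3*q1^4*q2 + 2*ε^3*q1^5 + 2*ε^3*δ*q2^4 + 4*ε^3*δ*q1*q2^3 + 6*ε^3*δ*q1^2*q2^2 + 4*ε^3*δ*q1^3*q2 + 2*ε^3*δ*q1^4 + 4*ε^4*q2^3*p2 + (-4)*ε^4*q1*q2^2*p2 + 8*ε^4*q1*q2^2*p1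 + 2*ε^4*q1*q2^3 + (-4)*ε^4*q1^2*q2*p2 + 8*ε^4*q1^2*q2*p1 + 6*ε^4*q1^2*q2^2 + 4*ε^4*q1^3*p1 + 4*ε^4*q1^3*q2 + 4*ε^4*δ*q1*q2^2 + 4*ε^4*δ*q1^2*q2 + 8*ε^5*q2^2*p2 + (-4)*ε^5*q2^2*p1 + (-2)*ε^5*q2^3 + 8*ε^5*q1*q2*p2 + (-4)*ε^5*q1*q2*p1 + (-6)*ε^5*q1*q2^2 + 8*ε^5*q1^2*p2 + (-4)*ε^5*q1^2*p1 + (-6)*ε^5*q1^2*q2 + (-4)*ε^5*q1^3 + (-4)*ε^5*δ*q2^2 + (-4)*ε^5*δ*q1*q2 + (-4)*ε^5*δ*q1^2 + (-2)*ε^6*q2*p2 + (-2)*ε^6*q1*p1 + (-4)*ε^7*p2 + 2*ε^7*p1 + 1*ε^7*q2 + 2*ε^7*q1 + 2*ε^7*δ + (-1)*(ε*δ/(ε-q2))*q1^2*q2^5 + (-2)*(ε*δ/(ε-q2))*q1^3*q2^4 + (-1)*(ε*δ/(ε-q2))*q1^4*q2^3 + 2*(ε*δ/(ε-q2))*ε*q1*q2^5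 + 2*(ε*δ/(ε-q2))*ε*q1^2*q2^4 + (-1)*(ε*δ/(ε-q2))*ε^2*q2^5 + 2*(ε*δ/(ε-q2))*ε^2*q1*q2^4 + 5*(ε*δ/(ε-q2))*ε^2*q1^2*q2^3 + 6*(ε*δ/(ε-q2))*ε^2*q1^3*q2^2 + 3*(ε*δ/(ε-q2))*ε^2*q1^4*q2 + (-2)*(ε*δ/(ε-q2))*ε^3*q2^4 + (-6)*(ε*δ/(ε-q2))*ε^3*q1*q2^3 + (-8)*(ε*δ/(ε-q2))*ε^3*q1^2*q2^2 + (-4)*(ε*δ/(ε-q2))*ε^3*q1^3*q2 + (-2)*(ε*δ/(ε-q2))*ε^3*q1^4 + 2*(ε*δ/(ε-q2))*ε^4*q2^3 + (-2)*(ε*δ/(ε-q2))*ε^4*q1*q2^2 + (-2)*(ε*δ/(ε-q2))*ε^4*q1^2*q2 + 4*(ε*δ/(ε-q2))*ε^5*q2^2 + 4*(ε*δ/(ε-q2))*ε^5*q1*q2 + 4*(ε*δ/(ε-q2))*ε^5*q1^2 + (-1)*(ε*δ/(ε-q2))*ε^6*q2 + (-2)*(ε*δ/(ε-q2))*ε^7)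 * hc

set_option maxHeartbeats 1600000 in
/-- Second half-step: updating `q` with `p̄` fixed. -/
lemma kdv2_halfB (ε δ q1 q2 pbar1 pbar2 : ℝ)
    (h4 : ε - pbar1 ≠ 0) (h5 : ε + pbar2 ≠ 0) (h6 : ε + pbar1 - pbar2 ≠ 0)
    (qbar1 : ℝ)
    (hqbar1 : qbar1 = q1 - ε * δ / (ε - pbar1) + ε * δ / (ε + pbar1 - pbar2))
    (qbar2 : ℝ)
    (hqbar2 : qbar2 = q2 + ε * δ / (ε + pbar2) - ε * δ / (ε + pbar1 - pbar2)) :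
    kdv2P2 ε δ qbar1 qbar2 pbar1 pbar2
      = kdv2P2 ε δ q1 q2 pbar1 pbar2 + 6 * ε * δ * (q1 * pbar1 + q2 * pbar2) := by
  have ha : ε * δ / (ε - pbar1) * (ε - pbar1) = ε * δ := div_mul_cancel₀ _ h4
  have hb : ε * δ / (ε + pbar1 - pbar2) * (ε + pbar1 - pbar2) = ε * δ := div_mul_cancel₀ _ h6
  have hc : ε * δ / (ε + pbar2) * (ε + pbar2) = ε * δ := div_mul_cancel₀ _ h5
  have hX : ((ε - pbar1) * (ε + pbar1 - pbar2) * (ε + pbar2))^2 ≠ 0 :=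
    pow_ne_zero _ (mul_ne_zero (mul_ne_zero h4 h6) h5)
  subst hqbar1 hqbar2
  rw [kdv2P2_eq, kdv2P2_eq]
  apply mul_right_cancel₀ hX
  linear_combination (exp := 1)
    (2*q2*pbar1^2*pbar2^5 + (-4)*q2*pbar1^3*pbar2^4 + 2*q2*pbar1^4*pbar2^3 + 2*q1*pbar1^3*pbar2^4 + (-4)*q1*pbar1^4*pbar2^3 + 2*q1*pbar1^5*pbar2^2 + (-2)*ε*pbar1^2*pbar2^5 + 5*ε*pbar1^3*pbar2^4 + (-4)*ε*pbar1^4*pbar2^3 + 1*ε*pbar1^5*pbar2^2 + (-4)*ε*q2*pbar1*pbar2^5 + 10*ε*q2*pbar1^2*pbar2^4 + (-12)*ε*q2*pbar1^3*pbar2^3 + 6*ε*q2*pbar1^4*pbar2^2 + (-4)*ε*q1*pbar1^4*pbar2^2 + 4*ε*q1*pbar1^5*pbar2 + (-2)*ε*δ*pbar1^2*pbar2^4 + 4*ε*δ*pbar1^3*pbar2^3 + (-2)*ε*δ*pbar1^4*pbar2^2 + 4*ε^2*pbar1*pbar2^5 + (-10)*ε^2*pbar1^2*pbar2^4 + 12*ε^2*pbar1^3*pbar2^3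 + (-8)*ε^2*pbar1^4*pbar2^2 + 2*ε^2*pbar1^5*pbar2 + 2*ε^2*q2*pbar2^5 + (-8)*ε^2*q2*pbar1*pbar2^4 + 14*ε^2*q2*pbar1^2*pbar2^3 + (-12)*ε^2*q2*pbar1^3*pbar2^2 + 6*ε^2*q2*pbar1^4*pbar2 + (-6)*ε^2*q1*pbar1*pbar2^4 + 12*ε^2*q1*pbar1^2*pbar2^3 + (-10)*ε^2*q1*pbar1^3*pbar2^2 + 4*ε^2*q1*pbar1^4*pbar2 + 2*ε^2*q1*pbar1^5 + 4*ε^2*δ*pbar1*pbar2^4 + (-8)*ε^2*δ*pbar1^2*pbar2^3 + 8*ε^2*δ*pbar1^3*pbar2^2 + (-4)*ε^2*δ*pbar1^4*pbar2 + (-2)*ε^3*pbar2^5 + 5*ε^3*pbar1*pbar2^4 + (-8)*ε^3*pbar1^2*pbar2^3 + 7*ε^3*pbar1^3*pbar2^2 + (-4)*ε^3*pbar1^4*pbar2 + 1*ε^3*pbar1^5 + 2*ε^3*q2*pbar2^4 + 2*ε^3*q2*pbar1^2*pbar2^2 + (-4)*ε^3*q2*pbar1^3*pbar2 + 2*ε^3*q2*pbar1^4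 + 4*ε^3*q1*pbar2^4 + (-8)*ε^3*q1*pbar1*pbar2^3 + 16*ε^3*q1*pbar1^2*pbar2^2 + (-12)*ε^3*q1*pbar1^3*pbar2 + 4*ε^3*q1*pbar1^4 + (-2)*ε^3*δ*pbar2^4 + 4*ε^3*δ*pbar1*pbar2^3 + (-6)*ε^3*δ*pbar1^2*pbar2^2 + 4*ε^3*δ*pbar1^3*pbar2 + (-2)*ε^3*δ*pbar1^4 + (-4)*ε^4*pbar1*pbar2^3 + 6*ε^4*pbar1^2*pbar2^2 + (-2)*ε^4*pbar1^3*pbar2 + (-4)*ε^4*q2*pbar2^3 + 8*ε^4*q2*pbar1*pbar2^2 + (-8)*ε^4*q2*pbar1^2*pbar2 + 4*ε^4*q1*pbar1*pbar2^2 + (-4)*ε^4*q1*pbar1^2*pbar2 + (-4)*ε^4*q1*pbar1^3 + (-4)*ε^4*δ*pbar1*pbar2^2 + 4*ε^4*δ*pbar1^2*pbar2 + 4*ε^5*pbar2^3 + (-6)*ε^5*pbar1*pbar2^2 + 6*ε^5*pbar1^2*pbar2 + (-2)*ε^5*pbar1^3 + (-4)*ε^5*q2*pbar2^2 + 4*ε^5*q2*pbar1*pbar2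 + (-4)*ε^5*q2*pbar1^2 + (-8)*ε^5*q1*pbar2^2 + 8*ε^5*q1*pbar1*pbar2 + (-8)*ε^5*q1*pbar1^2 + 4*ε^5*δ*pbar2^2 + (-4)*ε^5*δ*pbar1*pbar2 + 4*ε^5*δ*pbar1^2 + 2*ε^6*q2*pbar2 + 2*ε^6*q1*pbar1 + (-2)*ε^7*pbar2 + 1*ε^7*pbar1 + 2*ε^7*q2 + 4*ε^7*q1 + (-2)*ε^7*δ + 2*(ε*δ/(ε+pbar2))*pbar1^2*pbar2^5 + (-4)*(ε*δ/(ε+pbar2))*pbar1^3*pbar2^4 + 2*(ε*δ/(ε+pbar2))*pbar1^4*pbar2^3 + (-4)*(ε*δ/(ε+pbar2))*ε*pbar1*pbar2^5 + 10*(ε*δ/(ε+pbar2))*ε*pbar1^2*pbar2^4 + (-12)*(ε*δ/(ε+pbar2))*ε*pbar1^3*pbar2^3 + 6*(ε*δ/(ε+pbar2))*ε*pbar1^4*pbar2^2 + 2*(ε*δ/(ε+pbar2))*ε^2*pbar2^5 + (-8)*(ε*δ/(ε+pbar2))*ε^2*pbar1*pbar2^4 + 14*(ε*δ/(ε+pbar2))*ε^2*pbar1^2*pbar2^3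 + (-12)*(ε*δ/(ε+pbar2))*ε^2*pbar1^3*pbar2^2 + 6*(ε*δ/(ε+pbar2))*ε^2*pbar1^4*pbar2 + 2*(ε*δ/(ε+pbar2))*ε^3*pbar2^4 + 2*(ε*δ/(ε+pbar2))*ε^3*pbar1^2*pbar2^2 + (-4)*(ε*δ/(ε+pbar2))*ε^3*pbar1^3*pbar2 + 2*(ε*δ/(ε+pbar2))*ε^3*pbar1^4 + (-4)*(ε*δ/(ε+pbar2))*ε^4*pbar2^3 + 8*(ε*δ/(ε+pbar2))*ε^4*pbar1*pbar2^2 + (-8)*(ε*δ/(ε+pbar2))*ε^4*pbar1^2*pbar2 + (-4)*(ε*δ/(ε+pbar2))*ε^5*pbar2^2 + 4*(ε*δ/(ε+pbar2))*ε^5*pbar1*pbar2 + (-4)*(ε*δ/(ε+pbar2))*ε^5*pbar1^2 + 2*(ε*δ/(ε+pbar2))*ε^6*pbar2 + 2*(ε*δ/(ε+pbar2))*ε^7 + (-2)*(ε*δ/(ε+pbar1-pbar2))*pbar1^2*pbar2^5 + 6*(ε*δ/(ε+pbar1-pbar2))*pbar1^3*pbar2^4 + (-6)*(ε*δ/(ε+pbar1-pbar2))*pbar1^4*pbar2^3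 + 2*(ε*δ/(ε+pbar1-pbar2))*pbar1^5*pbar2^2 + 4*(ε*δ/(ε+pbar1-pbar2))*ε*pbar1*pbar2^5 + (-10)*(ε*δ/(ε+pbar1-pbar2))*ε*pbar1^2*pbar2^4 + 12*(ε*δ/(ε+pbar1-pbar2))*ε*pbar1^3*pbar2^3 + (-10)*(ε*δ/(ε+pbar1-pbar2))*ε*pbar1^4*pbar2^2 + 4*(ε*δ/(ε+pbar1-pbar2))*ε*pbar1^5*pbar2 + (-2)*(ε*δ/(ε+pbar1-pbar2))*ε^2*pbar2^5 + 2*(ε*δ/(ε+pbar1-pbar2))*ε^2*pbar1*pbar2^4 + (-2)*(ε*δ/(ε+pbar1-pbar2))*ε^2*pbar1^2*pbar2^3 + 2*(ε*δ/(ε+pbar1-pbar2))*ε^2*pbar1^3*pbar2^2 + (-2)*(ε*δ/(ε+pbar1-pbar2))*ε^2*pbar1^4*pbar2 + 2*(ε*δ/(ε+pbar1-pbar2))*ε^2*pbar1^5 + 2*(ε*δ/(ε+pbar1-pbar2))*ε^3*pbar2^4 + (-8)*(ε*δ/(ε+pbar1-pbar2))*ε^3*pbar1*pbar2^3 + 14*(ε*δ/(ε+pbar1-pbar2))*ε^3*pbar1^2*pbar2^2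 + (-8)*(ε*δ/(ε+pbar1-pbar2))*ε^3*pbar1^3*pbar2 + 2*(ε*δ/(ε+pbar1-pbar2))*ε^3*pbar1^4 + 4*(ε*δ/(ε+pbar1-pbar2))*ε^4*pbar2^3 + (-4)*(ε*δ/(ε+pbar1-pbar2))*ε^4*pbar1*pbar2^2 + 4*(ε*δ/(ε+pbar1-pbar2))*ε^4*pbar1^2*pbar2 + (-4)*(ε*δ/(ε+pbar1-pbar2))*ε^4*pbar1^3 + (-4)*(ε*δ/(ε+pbar1-pbar2))*ε^5*pbar2^2 + 4*(ε*δ/(ε+pbar1-pbar2))*ε^5*pbar1*pbar2 + (-4)*(ε*δ/(ε+pbar1-pbar2))*ε^5*pbar1^2 + (-2)*(ε*δ/(ε+pbar1-pbar2))*ε^6*pbar2 + 2*(ε*δ/(ε+pbar1-pbar2))*ε^6*pbar1 + 2*(ε*δ/(ε+pbar1-pbar2))*ε^7 + (-1)*(ε*δ/(ε-pbar1))*pbar1^3*pbar2^4 + 2*(ε*δ/(ε-pbar1))*pbar1^4*pbar2^3 + (-1)*(ε*δ/(ε-pbar1))*pbar1^5*pbar2^2 + 2*(ε*δ/(ε-pbar1))*ε*pbar1^4*pbar2^2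 + (-2)*(ε*δ/(ε-pbar1))*ε*pbar1^5*pbar2 + 3*(ε*δ/(ε-pbar1))*ε^2*pbar1*pbar2^4 + (-6)*(ε*δ/(ε-pbar1))*ε^2*pbar1^2*pbar2^3 + 5*(ε*δ/(ε-pbar1))*ε^2*pbar1^3*pbar2^2 + (-2)*(ε*δ/(ε-pbar1))*ε^2*pbar1^4*pbar2 + (-1)*(ε*δ/(ε-pbar1))*ε^2*pbar1^5 + (-2)*(ε*δ/(ε-pbar1))*ε^3*pbar2^4 + 4*(ε*δ/(ε-pbar1))*ε^3*pbar1*pbar2^3 + (-8)*(ε*δ/(ε-pbar1))*ε^3*pbar1^2*pbar2^2 + 6*(ε*δ/(ε-pbar1))*ε^3*pbar1^3*pbar2 + (-2)*(ε*δ/(ε-pbar1))*ε^3*pbar1^4 + (-2)*(ε*δ/(ε-pbar1))*ε^4*pbar1*pbar2^2 + 2*(ε*δ/(ε-pbar1))*ε^4*pbar1^2*pbar2 + 2*(ε*δ/(ε-pbar1))*ε^4*pbar1^3 + 4*(ε*δ/(ε-pbar1))*ε^5*pbar2^2 + (-4)*(ε*δ/(ε-pbar1))*ε^5*pbar1*pbar2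 + 4*(ε*δ/(ε-pbar1))*ε^5*pbar1^2 + (-1)*(ε*δ/(ε-pbar1))*ε^6*pbar1 + (-2)*(ε*δ/(ε-pbar1))*ε^7) * ha +
    (2*q2*pbar1^2*pbar2^5 + (-4)*q2*pbar1^3*pbar2^4 + 2*q2*pbar1^4*pbar2^3 + 2*q1*pbar1^3*pbar2^4 + (-4)*q1*pbar1^4*pbar2^3 + 2*q1*pbar1^5*pbar2^2 + 1*ε*pbar1^2*pbar2^5 + (-1)*ε*pbar1^3*pbar2^4 + (-1)*ε*pbar1^4*pbar2^3 + 1*ε*pbar1^5*pbar2^2 + (-4)*ε*q2*pbar1*pbar2^5 + 10*ε*q2*pbar1^2*pbar2^4 + (-12)*ε*q2*pbar1^3*pbar2^3 + 6*ε*q2*pbar1^4*pbar2^2 + (-6)*ε*q1*pbar1^2*pbar2^4 + 12*ε*q1*pbar1^3*pbar2^3 + (-10)*ε*q1*pbar1^4*pbar2^2 + 4*ε*q1*pbar1^5*pbar2 + (-2)*ε^2*pbar1*pbar2^5 + 2*ε^2*pbar1^2*pbar2^4 + (-2)*ε^2*pbar1^4*pbar2^2 + 2*ε^2*pbar1^5*pbar2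 + 2*ε^2*q2*pbar2^5 + (-8)*ε^2*q2*pbar1*pbar2^4 + 14*ε^2*q2*pbar1^2*pbar2^3 + (-12)*ε^2*q2*pbar1^3*pbar2^2 + 6*ε^2*q2*pbar1^4*pbar2 + 6*ε^2*q1*pbar1*pbar2^4 + (-12)*ε^2*q1*pbar1^2*pbar2^3 + 14*ε^2*q1*pbar1^3*pbar2^2 + (-8)*ε^2*q1*pbar1^4*pbar2 + 2*ε^2*q1*pbar1^5 + 1*ε^3*pbar2^5 + (-1)*ε^3*pbar1*pbar2^4 + 1*ε^3*pbar1^2*pbar2^3 + 1*ε^3*pbar1^3*pbar2^2 + (-1)*ε^3*pbar1^4*pbar2 + 1*ε^3*pbar1^5 + 2*ε^3*q2*pbar2^4 + 2*ε^3*q2*pbar1^2*pbar2^2 + (-4)*ε^3*q2*pbar1^3*pbar2 + 2*ε^3*q2*pbar1^4 + (-2)*ε^3*q1*pbar2^4 + 4*ε^3*q1*pbar1*pbar2^3 + (-2)*ε^3*q1*pbar1^2*pbar2^2 + (-2)*ε^3*q1*pbar1^4 + 2*ε^4*pbar1*pbar2^3 + (-2)*ε^4*pbar1^3*pbar2 +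 (-4)*ε^4*q2*pbar2^3 + 8*ε^4*q2*pbar1*pbar2^2 + (-8)*ε^4*q2*pbar1^2*pbar2 + (-8)*ε^4*q1*pbar1*pbar2^2 + 8*ε^4*q1*pbar1^2*pbar2 + (-4)*ε^4*q1*pbar1^3 + (-2)*ε^5*pbar2^3 + (-2)*ε^5*pbar1^3 + (-4)*ε^5*q2*pbar2^2 + 4*ε^5*q2*pbar1*pbar2 + (-4)*ε^5*q2*pbar1^2 + 4*ε^5*q1*pbar2^2 + (-4)*ε^5*q1*pbar1*pbar2 + 4*ε^5*q1*pbar1^2 + 2*ε^6*q2*pbar2 + 2*ε^6*q1*pbar1 + 1*ε^7*pbar2 + 1*ε^7*pbar1 + 2*ε^7*q2 + (-2)*ε^7*q1 + 2*(ε*δ/(ε+pbar2))*pbar1^2*pbar2^5 + (-4)*(ε*δ/(ε+pbar2))*pbar1^3*pbar2^4 + 2*(ε*δ/(ε+pbar2))*pbar1^4*pbar2^3 + (-4)*(ε*δ/(ε+pbar2))*ε*pbar1*pbar2^5 + 10*(ε*δ/(ε+pbar2))*ε*pbar1^2*pbar2^4 + (-12)*(ε*δ/(ε+pbar2))*ε*pbar1^3*pbar2^3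 + 6*(ε*δ/(ε+pbar2))*ε*pbar1^4*pbar2^2 + 2*(ε*δ/(ε+pbar2))*ε^2*pbar2^5 + (-8)*(ε*δ/(ε+pbar2))*ε^2*pbar1*pbar2^4 + 14*(ε*δ/(ε+pbar2))*ε^2*pbar1^2*pbar2^3 + (-12)*(ε*δ/(ε+pbar2))*ε^2*pbar1^3*pbar2^2 + 6*(ε*δ/(ε+pbar2))*ε^2*pbar1^4*pbar2 + 2*(ε*δ/(ε+pbar2))*ε^3*pbar2^4 + 2*(ε*δ/(ε+pbar2))*ε^3*pbar1^2*pbar2^2 + (-4)*(ε*δ/(ε+pbar2))*ε^3*pbar1^3*pbar2 + 2*(ε*δ/(ε+pbar2))*ε^3*pbar1^4 + (-4)*(ε*δ/(ε+pbar2))*ε^4*pbar2^3 + 8*(ε*δ/(ε+pbar2))*ε^4*pbar1*pbar2^2 + (-8)*(ε*δ/(ε+pbar2))*ε^4*pbar1^2*pbar2 + (-4)*(ε*δ/(ε+pbar2))*ε^5*pbar2^2 + 4*(ε*δ/(ε+pbar2))*ε^5*pbar1*pbar2 + (-4)*(ε*δ/(ε+pbar2))*ε^5*pbar1^2 + 2*(ε*δ/(ε+pbar2))*ε^6*pbar2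 + 2*(ε*δ/(ε+pbar2))*ε^7 + (-1)*(ε*δ/(ε+pbar1-pbar2))*pbar1^2*pbar2^5 + 3*(ε*δ/(ε+pbar1-pbar2))*pbar1^3*pbar2^4 + (-3)*(ε*δ/(ε+pbar1-pbar2))*pbar1^4*pbar2^3 + 1*(ε*δ/(ε+pbar1-pbar2))*pbar1^5*pbar2^2 + 2*(ε*δ/(ε+pbar1-pbar2))*ε*pbar1*pbar2^5 + (-8)*(ε*δ/(ε+pbar1-pbar2))*ε*pbar1^2*pbar2^4 + 12*(ε*δ/(ε+pbar1-pbar2))*ε*pbar1^3*pbar2^3 + (-8)*(ε*δ/(ε+pbar1-pbar2))*ε*pbar1^4*pbar2^2 + 2*(ε*δ/(ε+pbar1-pbar2))*ε*pbar1^5*pbar2 + (-1)*(ε*δ/(ε+pbar1-pbar2))*ε^2*pbar2^5 + 7*(ε*δ/(ε+pbar1-pbar2))*ε^2*pbar1*pbar2^4 + (-13)*(ε*δ/(ε+pbar1-pbar2))*ε^2*pbar1^2*pbar2^3 + 13*(ε*δ/(ε+pbar1-pbar2))*ε^2*pbar1^3*pbar2^2 + (-7)*(ε*δ/(ε+pbar1-pbar2))*ε^2*pbar1^4*pbar2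 + 1*(ε*δ/(ε+pbar1-pbar2))*ε^2*pbar1^5 + (-2)*(ε*δ/(ε+pbar1-pbar2))*ε^3*pbar2^4 + 2*(ε*δ/(ε+pbar1-pbar2))*ε^3*pbar1*pbar2^3 + (-2)*(ε*δ/(ε+pbar1-pbar2))*ε^3*pbar1^2*pbar2^2 + 2*(ε*δ/(ε+pbar1-pbar2))*ε^3*pbar1^3*pbar2 + (-2)*(ε*δ/(ε+pbar1-pbar2))*ε^3*pbar1^4 + 2*(ε*δ/(ε+pbar1-pbar2))*ε^4*pbar2^3 + (-8)*(ε*δ/(ε+pbar1-pbar2))*ε^4*pbar1*pbar2^2 + 8*(ε*δ/(ε+pbar1-pbar2))*ε^4*pbar1^2*pbar2 + (-2)*(ε*δ/(ε+pbar1-pbar2))*ε^4*pbar1^3 + 4*(ε*δ/(ε+pbar1-pbar2))*ε^5*pbar2^2 + (-4)*(ε*δ/(ε+pbar1-pbar2))*ε^5*pbar1*pbar2 + 4*(ε*δ/(ε+pbar1-pbar2))*ε^5*pbar1^2 + (-1)*(ε*δ/(ε+pbar1-pbar2))*ε^6*pbar2 + 1*(ε*δ/(ε+pbar1-pbar2))*ε^6*pbar1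 + (-2)*(ε*δ/(ε+pbar1-pbar2))*ε^7) * hb +
    (2*q2*pbar1^2*pbar2^5 + (-4)*q2*pbar1^3*pbar2^4 + 2*q2*pbar1^4*pbar2^3 + 2*q1*pbar1^3*pbar2^4 + (-4)*q1*pbar1^4*pbar2^3 + 2*q1*pbar1^5*pbar2^2 + 1*ε*pbar1^2*pbar2^5 + (-4)*ε*pbar1^3*pbar2^4 + 5*ε*pbar1^4*pbar2^3 + (-2)*ε*pbar1^5*pbar2^2 + (-4)*ε*q2*pbar1*pbar2^5 + 4*ε*q2*pbar1^2*pbar2^4 + (-6)*ε*q1*pbar1^2*pbar2^4 + 12*ε*q1*pbar1^3*pbar2^3 + (-10)*ε*q1*pbar1^4*pbar2^2 + 4*ε*q1*pbar1^5*pbar2 + 2*ε*δ*pbar1^2*pbar2^4 + (-4)*ε*δ*pbar1^3*pbar2^3 + 2*ε*δ*pbar1^4*pbar2^2 + (-2)*ε^2*pbar1*pbar2^5 + 8*ε^2*pbar1^2*pbar2^4 + (-12)*ε^2*pbar1^3*pbar2^3 + 10*ε^2*pbar1^4*pbar2^2 + (-4)*ε^2*pbar1^5*pbar2 + 2*ε^2*q2*pbar2^5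 + 4*ε^2*q2*pbar1*pbar2^4 + (-10)*ε^2*q2*pbar1^2*pbar2^3 + 12*ε^2*q2*pbar1^3*pbar2^2 + (-6)*ε^2*q2*pbar1^4*pbar2 + 6*ε^2*q1*pbar1*pbar2^4 + (-12)*ε^2*q1*pbar1^2*pbar2^3 + 14*ε^2*q1*pbar1^3*pbar2^2 + (-8)*ε^2*q1*pbar1^4*pbar2 + 2*ε^2*q1*pbar1^5 + (-4)*ε^2*δ*pbar1*pbar2^4 + 8*ε^2*δ*pbar1^2*pbar2^3 + (-8)*ε^2*δ*pbar1^3*pbar2^2 + 4*ε^2*δ*pbar1^4*pbar2 + 1*ε^3*pbar2^5 + (-4)*ε^3*pbar1*pbar2^4 + 7*ε^3*pbar1^2*pbar2^3 + (-8)*ε^3*pbar1^3*pbar2^2 + 5*ε^3*pbar1^4*pbar2 + (-2)*ε^3*pbar1^5 + (-4)*ε^3*q2*pbar2^4 + 12*ε^3*q2*pbar1*pbar2^3 + (-16)*ε^3*q2*pbar1^2*pbar2^2 + 8*ε^3*q2*pbar1^3*pbar2 + (-4)*ε^3*q2*pbar1^4 + (-2)*ε^3*q1*pbar2^4 + 4*ε^3*q1*pbar1*pbar2^3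 + (-2)*ε^3*q1*pbar1^2*pbar2^2 + (-2)*ε^3*q1*pbar1^4 + 2*ε^3*δ*pbar2^4 + (-4)*ε^3*δ*pbar1*pbar2^3 + 6*ε^3*δ*pbar1^2*pbar2^2 + (-4)*ε^3*δ*pbar1^3*pbar2 + 2*ε^3*δ*pbar1^4 + 2*ε^4*pbar1*pbar2^3 + (-6)*ε^4*pbar1^2*pbar2^2 + 4*ε^4*pbar1^3*pbar2 + (-4)*ε^4*q2*pbar2^3 + (-4)*ε^4*q2*pbar1*pbar2^2 + 4*ε^4*q2*pbar1^2*pbar2 + (-8)*ε^4*q1*pbar1*pbar2^2 + 8*ε^4*q1*pbar1^2*pbar2 + (-4)*ε^4*q1*pbar1^3 + 4*ε^4*δ*pbar1*pbar2^2 + (-4)*ε^4*δ*pbar1^2*pbar2 + (-2)*ε^5*pbar2^3 + 6*ε^5*pbar1*pbar2^2 + (-6)*ε^5*pbar1^2*pbar2 + 4*ε^5*pbar1^3 + 8*ε^5*q2*pbar2^2 + (-8)*ε^5*q2*pbar1*pbar2 + 8*ε^5*q2*pbar1^2 + 4*ε^5*q1*pbar2^2 + (-4)*ε^5*q1*pbar1*pbar2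 + 4*ε^5*q1*pbar1^2 + (-4)*ε^5*δ*pbar2^2 + 4*ε^5*δ*pbar1*pbar2 + (-4)*ε^5*δ*pbar1^2 + 2*ε^6*q2*pbar2 + 2*ε^6*q1*pbar1 + 1*ε^7*pbar2 + (-2)*ε^7*pbar1 + (-4)*ε^7*q2 + (-2)*ε^7*q1 + 2*ε^7*δ + 1*(ε*δ/(ε+pbar2))*pbar1^2*pbar2^5 + (-2)*(ε*δ/(ε+pbar2))*pbar1^3*pbar2^4 + 1*(ε*δ/(ε+pbar2))*pbar1^4*pbar2^3 + (-2)*(ε*δ/(ε+pbar2))*ε*pbar1*pbar2^5 + 2*(ε*δ/(ε+pbar2))*ε*pbar1^2*pbar2^4 + 1*(ε*δ/(ε+pbar2))*ε^2*pbar2^5 + 2*(ε*δ/(ε+pbar2))*ε^2*pbar1*pbar2^4 + (-5)*(ε*δ/(ε+pbar2))*ε^2*pbar1^2*pbar2^3 + 6*(ε*δ/(ε+pbar2))*ε^2*pbar1^3*pbar2^2 + (-3)*(ε*δ/(ε+pbar2))*ε^2*pbar1^4*pbar2 + (-2)*(ε*δ/(ε+pbar2))*ε^3*pbar2^4 + 6*(ε*δ/(ε+pbar2))*ε^3*pbar1*pbar2^3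 + (-8)*(ε*δ/(ε+pbar2))*ε^3*pbar1^2*pbar2^2 + 4*(ε*δ/(ε+pbar2))*ε^3*pbar1^3*pbar2 + (-2)*(ε*δ/(ε+pbar2))*ε^3*pbar1^4 + (-2)*(ε*δ/(ε+pbar2))*ε^4*pbar2^3 + (-2)*(ε*δ/(ε+pbar2))*ε^4*pbar1*pbar2^2 + 2*(ε*δ/(ε+pbar2))*ε^4*pbar1^2*pbar2 + 4*(ε*δ/(ε+pbar2))*ε^5*pbar2^2 + (-4)*(ε*δ/(ε+pbar2))*ε^5*pbar1*pbar2 + 4*(ε*δ/(ε+pbar2))*ε^5*pbar1^2 + 1*(ε*δ/(ε+pbar2))*ε^6*pbar2 + (-2)*(ε*δ/(ε+pbar2))*ε^7) * hc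

/-- `𝒫₂` is invariant under the two-degrees-of-freedom KdV map. -/
theorem kdv2_map_invariant_P2 (ε δ q1 q2 p1 p2 : ℝ)
    (h1 : ε - q1 ≠ 0) (h2 : ε - q2 ≠ 0) (h3 : ε + q1 + q2 ≠ 0)
    (pbar1 : ℝ)
    (hpbar1 : pbar1 = p1 + ε * δ / (ε - q1) - ε * δ / (ε + q1 + q2))
    (pbar2 : ℝ)
    (hpbar2 : pbar2 = p2 + ε * δ / (ε - q2) - ε * δ / (ε + q1 + q2))
    (h4 : ε - pbar1 ≠ 0) (h5 : ε + pbar2 ≠ 0) (h6 : ε + pbar1 - pbar2 ≠ 0)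
    (qbar1 : ℝ)
    (hqbar1 : qbar1 = q1 - ε * δ / (ε - pbar1) + ε * δ / (ε + pbar1 - pbar2))
    (qbar2 : ℝ)
    (hqbar2 : qbar2 = q2 + ε * δ / (ε + pbar2) - ε * δ / (ε + pbar1 - pbar2)) :
    kdv2P2 ε δ qbar1 qbar2 pbar1 pbar2 = kdv2P2 ε δ q1 q2 p1 p2 := by
  have hB := kdv2_halfB ε δ q1 q2 pbar1 pbar2 h4 h5 h6 qbar1 hqbar1 qbar2 hqbar2
  have hA := kdv2_halfA ε δ q1 q2 p1 p2 h1 h2 h3 pbar1 hpbar1 pbar2 hpbar2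
  linarith
end
end

section
/- Let ε, δ be real parameters. The two-degrees-of-freedom KdV map Φ(q₁,q₂,p₁,p₂) = (q̄₁,q̄₂,p̄₁,p̄₂), given by p̄₁ = p₁ + εδ/(ε−q₁) − εδ/(ε+q₁+q₂), p̄₂ = p₂ + εδ/(ε−q₂) − εδ/(ε+q₁+q₂), q̄₁ = q₁ − εδ/(ε−p̄₁) + εδ/(ε+p̄₁−p̄₂), q̄₂ = q₂ + εδ/(ε+p̄₂) − εδ/(ε+p̄₁−p̄₂), is symplectic: at every point of its domain (where all denominators are nonzero), the 4×4 Jacobian matrix J of Φ in the coordinates (q₁,q₂,p₁,p₂) satisfies Jᵀ·Ω₀·J = Ω₀, where Ω₀ is the standard symplectic matrix Ω₀ = [[0, I₂],[−I₂, 0]]. Equivalently, Φ preserves the two-form Ω = dq₁∧dp₁ + dq₂∧dp₂. -/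
noncomputable section

open Matrix

/-- Update `p̄₁` of the two-degrees-of-freedom KdV map. -/
def kdv2Pbar1 (ε δ q1 q2 p1 p2 : ℝ) : ℝ :=
  p1 + ε * δ / (ε - q1) - ε * δ / (ε + q1 + q2)

/-- Update `p̄₂` of the two-degrees-of-freedom KdV map. -/
def kdv2Pbar2 (ε δ q1 q2 p1 p2 : ℝ) : ℝ :=
  p2 + ε * δ / (ε - q2) - ε * δ / (ε + q1 + q2)

/-- Update `q̄₁` of the two-degrees-of-freedom KdV map. -/
def kdv2Qbar1 (ε δ q1 q2 p1 p2 : ℝ) : ℝ :=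
  q1 - ε * δ / (ε - kdv2Pbar1 ε δ q1 q2 p1 p2) +
    ε * δ / (ε + kdv2Pbar1 ε δ q1 q2 p1 p2 - kdv2Pbar2 ε δ q1 q2 p1 p2)

/-- Update `q̄₂` of the two-degrees-of-freedom KdV map. -/
def kdv2Qbar2 (ε δ q1 q2 p1 p2 : ℝ) : ℝ :=
  q2 + ε * δ / (ε + kdv2Pbar2 ε δ q1 q2 p1 p2) -
    ε * δ / (ε + kdv2Pbar1 ε δ q1 q2 p1 p2 - kdv2Pbar2 ε δ q1 q2 p1 p2)

/-- The Jacobian matrix of the two-degrees-of-freedom KdV map in the coordinate ordering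
`(q₁,q₂,p₁,p₂)`; rows are the components `(q̄₁,q̄₂,p̄₁,p̄₂)` and columns the variables. -/
def kdv2Jacobian (ε δ q1 q2 p1 p2 : ℝ) : Matrix (Fin 4) (Fin 4) ℝ :=
  !![deriv (fun s => kdv2Qbar1 ε δ s q2 p1 p2) q1,
       deriv (fun s => kdv2Qbar1 ε δ q1 s p1 p2) q2,
       deriv (fun s => kdv2Qbar1 ε δ q1 q2 s p2) p1,
       deriv (fun s => kdv2Qbar1 ε δ q1 q2 p1 s) p2;
     deriv (fun s => kdv2Qbar2 ε δ s q2 p1 p2) q1,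
       deriv (fun s => kdv2Qbar2 ε δ q1 s p1 p2) q2,
       deriv (fun s => kdv2Qbar2 ε δ q1 q2 s p2) p1,
       deriv (fun s => kdv2Qbar2 ε δ q1 q2 p1 s) p2;
     deriv (fun s => kdv2Pbar1 ε δ s q2 p1 p2) q1,
       deriv (fun s => kdv2Pbar1 ε δ q1 s p1 p2) q2,
       deriv (fun s => kdv2Pbar1 ε δ q1 q2 s p2) p1,
       deriv (fun s => kdv2Pbar1 ε δ q1 q2 p1 s) p2;
     deriv (fun s => kdv2Pbar2 ε δ s q2 p1 p2) q1,
       deriv (fun s => kdv2Pbar2 ε δ q1 s p1 p2) q2,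
       deriv (fun s => kdv2Pbar2 ε δ q1 q2 s p2) p1,
       deriv (fun s => kdv2Pbar2 ε δ q1 q2 p1 s) p2]

/-- The standard symplectic matrix `Ω₀ = [[0, I₂],[−I₂, 0]]` on `ℝ⁴`. -/
def stdSymplectic4 : Matrix (Fin 4) (Fin 4) ℝ :=
  !![0, 0, 1, 0;
     0, 0, 0, 1;
     -1, 0, 0, 0;
     0, -1, 0, 0]

lemma hasDerivAt_const_div (a : ℝ) {u : ℝ → ℝ} {u' x : ℝ}
    (hu : HasDerivAt u u' x) (h : u x ≠ 0) :
    HasDerivAt (fun s => a / u s) (-(a * u') / (u x) ^ 2) x := by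
  have := (hasDerivAt_const x a).div hu h
  refine this.congr_deriv ?_
  ring

lemma qbar1_hasDerivAt (ε a : ℝ) {P1 P2 g : ℝ → ℝ} {d1 d2 dg x : ℝ}
    (hg : HasDerivAt g dg x) (hP1 : HasDerivAt P1 d1 x) (hP2 : HasDerivAt P2 d2 x)
    (h4 : ε - P1 x ≠ 0) (h6 : ε + P1 x - P2 x ≠ 0) :
    HasDerivAt (fun s => g s - a / (ε - P1 s) + a / (ε + P1 s - P2 s))
      (dg - a * d1 / (ε - P1 x) ^ 2 - a * (d1 - d2) / (ε + P1 x - P2 x) ^ 2) x := by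
  have t1 := hasDerivAt_const_div a (hP1.const_sub ε) h4
  have t2 := hasDerivAt_const_div a ((hP1.const_add ε).sub hP2) h6
  have := (hg.sub t1).add t2
  refine this.congr_deriv ?_
  simp only [Pi.sub_apply]
  ring

lemma qbar2_hasDerivAt (ε a : ℝ) {P1 P2 g : ℝ → ℝ} {d1 d2 dg x : ℝ}
    (hg : HasDerivAt g dg x) (hP1 : HasDerivAt P1 d1 x) (hP2 : HasDerivAt P2 d2 x)
    (h5 : ε + P2 x ≠ 0) (h6 : ε + P1 x - P2 x ≠ 0) :
    HasDerivAt (fun s => g s + a / (ε + P2 s) - a / (ε + P1 s - P2 s))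
      (dg - a * d2 / (ε + P2 x) ^ 2 + a * (d1 - d2) / (ε + P1 x - P2 x) ^ 2) x := by
  have t3 := hasDerivAt_const_div a (hP2.const_add ε) h5
  have t2 := hasDerivAt_const_div a ((hP1.const_add ε).sub hP2) h6
  have := (hg.add t3).sub t2
  refine this.congr_deriv ?_
  simp only [Pi.sub_apply]
  ring


set_option maxHeartbeats 1000000 in
lemma symplectic_core (α β γ u v w : ℝ) :
    (!![1 - u * α - w * (α - β), -(u * β) - w * (β - γ), -u - w, w;
        -(v * β) + w * (α - β), 1 - v * γ + w * (β - γ), w, -v - w;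
        α, β, 1, 0;
        β, γ, 0, 1] : Matrix (Fin 4) (Fin 4) ℝ)ᵀ * stdSymplectic4 *
      !![1 - u * α - w * (α - β), -(u * β) - w * (β - γ), -u - w, w;
         -(v * β) + w * (α - β), 1 - v * γ + w * (β - γ), w, -v - w;
         α, β, 1, 0;
         β, γ, 0, 1] = stdSymplectic4 := by
  ext i j
  fin_cases i <;> fin_cases j <;>
    simp [stdSymplectic4, Matrix.mul_apply, Fin.sum_univ_succ,
      Matrix.vecHead, Matrix.vecTail] <;>
    ring

set_option maxHeartbeats 2000000 in
/-- The two-degrees-of-freedom KdV map is symplectic: wherever all the denominators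
are nonzero, its Jacobian matrix `J` satisfies `Jᵀ Ω₀ J = Ω₀`. -/
theorem kdv2_map_symplectic (ε δ q1 q2 p1 p2 : ℝ)
    (h1 : ε - q1 ≠ 0) (h2 : ε - q2 ≠ 0) (h3 : ε + q1 + q2 ≠ 0)
    (h4 : ε - kdv2Pbar1 ε δ q1 q2 p1 p2 ≠ 0)
    (h5 : ε + kdv2Pbar2 ε δ q1 q2 p1 p2 ≠ 0)
    (h6 : ε + kdv2Pbar1 ε δ q1 q2 p1 p2 - kdv2Pbar2 ε δ q1 q2 p1 p2 ≠ 0) :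
    (kdv2Jacobian ε δ q1 q2 p1 p2)ᵀ * stdSymplectic4 * kdv2Jacobian ε δ q1 q2 p1 p2 =
      stdSymplectic4 := by
  -- derivatives of p̄₁
  have hP1q1 : HasDerivAt (fun s => kdv2Pbar1 ε δ s q2 p1 p2)
      (ε * δ / (ε - q1) ^ 2 + ε * δ / (ε + q1 + q2) ^ 2) q1 := by
    have t1 := hasDerivAt_const_div (ε * δ) ((hasDerivAt_id' _).const_sub ε) h1
    have t2 := hasDerivAt_const_div (ε * δ)
      (((hasDerivAt_id' _).const_add ε).add_const q2) h3
    have := ((hasDerivAt_const q1 p1).add t1).sub t2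
    unfold kdv2Pbar1
    refine this.congr_deriv ?_
    ring
  have hP1q2 : HasDerivAt (fun s => kdv2Pbar1 ε δ q1 s p1 p2)
      (ε * δ / (ε + q1 + q2) ^ 2) q2 := by
    have t2 := hasDerivAt_const_div (ε * δ) ((hasDerivAt_id' _).const_add (ε + q1)) h3
    have := (hasDerivAt_const q2 (p1 + ε * δ / (ε - q1))).sub t2
    unfold kdv2Pbar1
    refine this.congr_deriv ?_
    ring
  have hP1p1 : HasDerivAt (fun s => kdv2Pbar1 ε δ q1 q2 s p2) 1 p1 := by
    have := (((hasDerivAt_id' p1).add_const (ε * δ / (ε - q1))).sub_const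
      (ε * δ / (ε + q1 + q2)))
    unfold kdv2Pbar1
    exact this
  have hP1p2 : HasDerivAt (fun s => kdv2Pbar1 ε δ q1 q2 p1 s) 0 p2 := by
    unfold kdv2Pbar1
    exact hasDerivAt_const p2 _
  -- derivatives of p̄₂
  have hP2q1 : HasDerivAt (fun s => kdv2Pbar2 ε δ s q2 p1 p2)
      (ε * δ / (ε + q1 + q2) ^ 2) q1 := by
    have t2 := hasDerivAt_const_div (ε * δ)
      (((hasDerivAt_id' _).const_add ε).add_const q2) h3
    have := (hasDerivAt_const q1 (p2 + ε * δ / (ε - q2))).sub t2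
    unfold kdv2Pbar2
    refine this.congr_deriv ?_
    ring
  have hP2q2 : HasDerivAt (fun s => kdv2Pbar2 ε δ q1 s p1 p2)
      (ε * δ / (ε - q2) ^ 2 + ε * δ / (ε + q1 + q2) ^ 2) q2 := by
    have t1 := hasDerivAt_const_div (ε * δ) ((hasDerivAt_id' _).const_sub ε) h2
    have t2 := hasDerivAt_const_div (ε * δ) ((hasDerivAt_id' _).const_add (ε + q1)) h3
    have := ((hasDerivAt_const q2 p2).add t1).sub t2
    unfold kdv2Pbar2
    refine this.congr_deriv ?_
    ring
  have hP2p1 : HasDerivAt (fun s => kdv2Pbar2 ε δ q1 q2 s p2) 0 p1 := by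
    unfold kdv2Pbar2
    exact hasDerivAt_const p1 _
  have hP2p2 : HasDerivAt (fun s => kdv2Pbar2 ε δ q1 q2 p1 s) 1 p2 := by
    have := (((hasDerivAt_id' p2).add_const (ε * δ / (ε - q2))).sub_const
      (ε * δ / (ε + q1 + q2)))
    unfold kdv2Pbar2
    exact this
  -- derivatives of q̄₁
  have e11 := (qbar1_hasDerivAt ε (ε * δ) (hasDerivAt_id' _) hP1q1 hP2q1 h4 h6).deriv
  have e12 := (qbar1_hasDerivAt ε (ε * δ) (hasDerivAt_const q2 q1) hP1q2 hP2q2 h4 h6).deriv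
  have e13 := (qbar1_hasDerivAt ε (ε * δ) (hasDerivAt_const p1 q1) hP1p1 hP2p1 h4 h6).deriv
  have e14 := (qbar1_hasDerivAt ε (ε * δ) (hasDerivAt_const p2 q1) hP1p2 hP2p2 h4 h6).deriv
  -- derivatives of q̄₂
  have e21 := (qbar2_hasDerivAt ε (ε * δ) (hasDerivAt_const q1 q2) hP1q1 hP2q1 h5 h6).deriv
  have e22 := (qbar2_hasDerivAt ε (ε * δ) (hasDerivAt_id' _) hP1q2 hP2q2 h5 h6).deriv
  have e23 := (qbar2_hasDerivAt ε (ε * δ) (hasDerivAt_const p1 q2) hP1p1 hP2p1 h5 h6).deriv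
  have e24 := (qbar2_hasDerivAt ε (ε * δ) (hasDerivAt_const p2 q2) hP1p2 hP2p2 h5 h6).deriv
  have f11 : deriv (fun s => kdv2Qbar1 ε δ s q2 p1 p2) q1 = _ := e11
  have f12 : deriv (fun s => kdv2Qbar1 ε δ q1 s p1 p2) q2 = _ := e12
  have f13 : deriv (fun s => kdv2Qbar1 ε δ q1 q2 s p2) p1 = _ := e13
  have f14 : deriv (fun s => kdv2Qbar1 ε δ q1 q2 p1 s) p2 = _ := e14
  have f21 : deriv (fun s => kdv2Qbar2 ε δ s q2 p1 p2) q1 = _ := e21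
  have f22 : deriv (fun s => kdv2Qbar2 ε δ q1 s p1 p2) q2 = _ := e22
  have f23 : deriv (fun s => kdv2Qbar2 ε δ q1 q2 s p2) p1 = _ := e23
  have f24 : deriv (fun s => kdv2Qbar2 ε δ q1 q2 p1 s) p2 = _ := e24
  have g31 : deriv (fun s => kdv2Pbar1 ε δ s q2 p1 p2) q1 = _ := hP1q1.deriv
  have g32 : deriv (fun s => kdv2Pbar1 ε δ q1 s p1 p2) q2 = _ := hP1q2.deriv
  have g33 : deriv (fun s => kdv2Pbar1 ε δ q1 q2 s p2) p1 = _ := hP1p1.deriv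
  have g34 : deriv (fun s => kdv2Pbar1 ε δ q1 q2 p1 s) p2 = _ := hP1p2.deriv
  have g41 : deriv (fun s => kdv2Pbar2 ε δ s q2 p1 p2) q1 = _ := hP2q1.deriv
  have g42 : deriv (fun s => kdv2Pbar2 ε δ q1 s p1 p2) q2 = _ := hP2q2.deriv
  have g43 : deriv (fun s => kdv2Pbar2 ε δ q1 q2 s p2) p1 = _ := hP2p1.deriv
  have g44 : deriv (fun s => kdv2Pbar2 ε δ q1 q2 p1 s) p2 = _ := hP2p2.deriv
  have hJ : kdv2Jacobian ε δ q1 q2 p1 p2 =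
      !![1 - (ε * δ / (ε - kdv2Pbar1 ε δ q1 q2 p1 p2) ^ 2) *
            (ε * δ / (ε - q1) ^ 2 + ε * δ / (ε + q1 + q2) ^ 2) -
          (ε * δ / (ε + kdv2Pbar1 ε δ q1 q2 p1 p2 - kdv2Pbar2 ε δ q1 q2 p1 p2) ^ 2) *
            (ε * δ / (ε - q1) ^ 2 + ε * δ / (ε + q1 + q2) ^ 2 - ε * δ / (ε + q1 + q2) ^ 2),
         -((ε * δ / (ε - kdv2Pbar1 ε δ q1 q2 p1 p2) ^ 2) * (ε * δ / (ε + q1 + q2) ^ 2)) -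
          (ε * δ / (ε + kdv2Pbar1 ε δ q1 q2 p1 p2 - kdv2Pbar2 ε δ q1 q2 p1 p2) ^ 2) *
            (ε * δ / (ε + q1 + q2) ^ 2 -
              (ε * δ / (ε - q2) ^ 2 + ε * δ / (ε + q1 + q2) ^ 2)),
         -(ε * δ / (ε - kdv2Pbar1 ε δ q1 q2 p1 p2) ^ 2) -
          ε * δ / (ε + kdv2Pbar1 ε δ q1 q2 p1 p2 - kdv2Pbar2 ε δ q1 q2 p1 p2) ^ 2,
         ε * δ / (ε + kdv2Pbar1 ε δ q1 q2 p1 p2 - kdv2Pbar2 ε δ q1 q2 p1 p2) ^ 2;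
         -((ε * δ / (ε + kdv2Pbar2 ε δ q1 q2 p1 p2) ^ 2) * (ε * δ / (ε + q1 + q2) ^ 2)) +
          (ε * δ / (ε + kdv2Pbar1 ε δ q1 q2 p1 p2 - kdv2Pbar2 ε δ q1 q2 p1 p2) ^ 2) *
            (ε * δ / (ε - q1) ^ 2 + ε * δ / (ε + q1 + q2) ^ 2 - ε * δ / (ε + q1 + q2) ^ 2),
         1 - (ε * δ / (ε + kdv2Pbar2 ε δ q1 q2 p1 p2) ^ 2) *
            (ε * δ / (ε - q2) ^ 2 + ε * δ / (ε + q1 + q2) ^ 2) +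
          (ε * δ / (ε + kdv2Pbar1 ε δ q1 q2 p1 p2 - kdv2Pbar2 ε δ q1 q2 p1 p2) ^ 2) *
            (ε * δ / (ε + q1 + q2) ^ 2 -
              (ε * δ / (ε - q2) ^ 2 + ε * δ / (ε + q1 + q2) ^ 2)),
         ε * δ / (ε + kdv2Pbar1 ε δ q1 q2 p1 p2 - kdv2Pbar2 ε δ q1 q2 p1 p2) ^ 2,
         -(ε * δ / (ε + kdv2Pbar2 ε δ q1 q2 p1 p2) ^ 2) -
          ε * δ / (ε + kdv2Pbar1 ε δ q1 q2 p1 p2 - kdv2Pbar2 ε δ q1 q2 p1 p2) ^ 2;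
         ε * δ / (ε - q1) ^ 2 + ε * δ / (ε + q1 + q2) ^ 2, ε * δ / (ε + q1 + q2) ^ 2, 1, 0;
         ε * δ / (ε + q1 + q2) ^ 2,
           ε * δ / (ε - q2) ^ 2 + ε * δ / (ε + q1 + q2) ^ 2, 0, 1] := by
    unfold kdv2Jacobian
    rw [f11, f12, f13, f14, f21, f22, f23, f24, g31, g32, g33, g34, g41, g42, g43, g44]
    congr 1 <;> ring_nf
  rw [hJ]
  have := symplectic_core
    (ε * δ / (ε - q1) ^ 2 + ε * δ / (ε + q1 + q2) ^ 2)
    (ε * δ / (ε + q1 + q2) ^ 2)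
    (ε * δ / (ε - q2) ^ 2 + ε * δ / (ε + q1 + q2) ^ 2)
    (ε * δ / (ε - kdv2Pbar1 ε δ q1 q2 p1 p2) ^ 2)
    (ε * δ / (ε + kdv2Pbar2 ε δ q1 q2 p1 p2) ^ 2)
    (ε * δ / (ε + kdv2Pbar1 ε δ q1 q2 p1 p2 - kdv2Pbar2 ε δ q1 q2 p1 p2) ^ 2)
  exact this
end
end

section
/- Let ε, δ be real parameters and define H(q₁,q₂,p̄₁,p̄₂) = εδ·log((ε+p̄₁−p̄₂)(ε−p̄₁)(ε+p̄₂)) + εδ·log((ε+q₁+q₂)(ε−q₁)(ε−q₂)) on the region where each of the six factors ε+p̄₁−p̄₂, ε−p̄₁, ε+p̄₂, ε+q₁+q₂, ε−q₁, ε−q₂ is positive. Then the two-degrees-of-freedom KdV map, p̄₁ = p₁ + εδ/(ε−q₁) − εδ/(ε+q₁+q₂), p̄₂ = p₂ + εδ/(ε−q₂) − εδ/(ε+q₁+q₂), q̄₁ = q₁ − εδ/(ε−p̄₁) + εδ/(ε+p̄₁−p̄₂), q̄₂ = q₂ + εδ/(ε+p̄₂) − εδ/(ε+p̄₁−p̄₂),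 satisfies the discrete Hamilton equations p̄ᵢ − pᵢ = −∂H/∂qᵢ and q̄ᵢ − qᵢ = ∂H/∂p̄ᵢ for i = 1, 2, with all partial derivatives evaluated at (q₁,q₂,p̄₁,p̄₂); hence H is a generating function of the map. -/
noncomputable section

/-- The discrete Hamiltonian (generating function) of the two-degrees-of-freedom KdV map:
`H(q₁,q₂,p̄₁,p̄₂) = εδ log((ε+p̄₁−p̄₂)(ε−p̄₁)(ε+p̄₂)) + εδ log((ε+q₁+q₂)(ε−q₁)(ε−q₂))`. -/
def kdv2H (ε δ q1 q2 pb1 pb2 : ℝ) : ℝ :=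
  ε * δ * Real.log ((ε + pb1 - pb2) * (ε - pb1) * (ε + pb2)) +
    ε * δ * Real.log ((ε + q1 + q2) * (ε - q1) * (ε - q2))

/-- On the region where all six factors are positive, the two-degrees-of-freedom KdV map
satisfies the discrete Hamilton equations `p̄ᵢ − pᵢ = −∂H/∂qᵢ`, `q̄ᵢ − qᵢ = ∂H/∂p̄ᵢ`
(`i = 1,2`), with the partial derivatives evaluated at `(q₁,q₂,p̄₁,p̄₂)`; hence `H` is a
generating function of the map. -/
theorem kdv2_map_discrete_hamilton (ε δ q1 q2 p1 p2 : ℝ)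
    (hy1 : 0 < ε - q1) (hy2 : 0 < ε - q2) (hy0 : 0 < ε + q1 + q2)
    (pbar1 : ℝ)
    (hpbar1 : pbar1 = p1 + ε * δ / (ε - q1) - ε * δ / (ε + q1 + q2))
    (pbar2 : ℝ)
    (hpbar2 : pbar2 = p2 + ε * δ / (ε - q2) - ε * δ / (ε + q1 + q2))
    (hx1 : 0 < ε - pbar1) (hx2 : 0 < ε + pbar2) (hx3 : 0 < ε + pbar1 - pbar2)
    (qbar1 : ℝ)
    (hqbar1 : qbar1 = q1 - ε * δ / (ε - pbar1) + ε * δ / (ε + pbar1 - pbar2))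
    (qbar2 : ℝ)
    (hqbar2 : qbar2 = q2 + ε * δ / (ε + pbar2) - ε * δ / (ε + pbar1 - pbar2)) :
    pbar1 - p1 = -(deriv (fun s => kdv2H ε δ s q2 pbar1 pbar2) q1) ∧
    pbar2 - p2 = -(deriv (fun s => kdv2H ε δ q1 s pbar1 pbar2) q2) ∧
    qbar1 - q1 = deriv (fun s => kdv2H ε δ q1 q2 s pbar2) pbar1 ∧
    qbar2 - q2 = deriv (fun s => kdv2H ε δ q1 q2 pbar1 s) pbar2 := by
  have hy1' := hy1.ne'
  have hy2' := hy2.ne'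
  have hy0' := hy0.ne'
  have hx1' := hx1.ne'
  have hx2' := hx2.ne'
  have hx3' := hx3.ne'
  refine ⟨?_, ?_, ?_, ?_⟩
  · have hg : HasDerivAt (fun s => (ε + s + q2) * (ε - s) * (ε - q2))
        ((1 * (ε - q1) + (ε + q1 + q2) * (-1)) * (ε - q2)) q1 := by
      have h1 : HasDerivAt (fun s : ℝ => ε + s + q2) 1 q1 := by
        simpa using ((hasDerivAt_id q1).const_add ε).add_const q2
      have h2 : HasDerivAt (fun s : ℝ => ε - s) (-1) q1 := by
        simpa using (hasDerivAt_id q1).const_sub ε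
      exact (h1.mul h2).mul_const (ε - q2)
    have hprod : (ε + q1 + q2) * (ε - q1) * (ε - q2) ≠ 0 := by positivity
    have hd : HasDerivAt (fun s => kdv2H ε δ s q2 pbar1 pbar2)
        (ε * δ * ((1 * (ε - q1) + (ε + q1 + q2) * (-1)) * (ε - q2) /
          ((ε + q1 + q2) * (ε - q1) * (ε - q2)))) q1 := by
      unfold kdv2H
      exact ((hg.log hprod).const_mul (ε * δ)).const_add _
    rw [hd.deriv, hpbar1]
    field_simp
    ring
  · have h1 : HasDerivAt (fun s : ℝ => ε + q1 + s) 1 q2 := by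
      simpa using (hasDerivAt_id q2).const_add (ε + q1)
    have h2 : HasDerivAt (fun s : ℝ => ε - s) (-1) q2 := by
      simpa using (hasDerivAt_id q2).const_sub ε
    have hg : HasDerivAt (fun s => (ε + q1 + s) * ((ε - q1) * (ε - s)))
        (1 * ((ε - q1) * (ε - q2)) + (ε + q1 + q2) * (0 * (ε - q2) + (ε - q1) * (-1))) q2 :=
      h1.mul ((hasDerivAt_const q2 (ε - q1)).mul h2)
    have hprod : (ε + q1 + q2) * ((ε - q1) * (ε - q2)) ≠ 0 := by positivity
    have hd : HasDerivAt (fun s => kdv2H ε δ q1 s pbar1 pbar2)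
        (ε * δ * ((1 * ((ε - q1) * (ε - q2)) + (ε + q1 + q2) * (0 * (ε - q2) + (ε - q1) * (-1))) /
          ((ε + q1 + q2) * ((ε - q1) * (ε - q2))))) q2 := by
      unfold kdv2H
      simp only [mul_assoc]
      exact ((hg.log hprod).const_mul δ).const_mul ε |>.const_add _
    rw [hd.deriv, hpbar2]
    field_simp
    ring
  · have hg : HasDerivAt (fun s => (ε + s - pbar2) * (ε - s) * (ε + pbar2))
        ((1 * (ε - pbar1) + (ε + pbar1 - pbar2) * (-1)) * (ε + pbar2)) pbar1 := by
      have h1 : HasDerivAt (fun s : ℝ => ε + s - pbar2) 1 pbar1 := by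
        simpa using ((hasDerivAt_id pbar1).const_add ε).sub_const pbar2
      have h2 : HasDerivAt (fun s : ℝ => ε - s) (-1) pbar1 := by
        simpa using (hasDerivAt_id pbar1).const_sub ε
      exact (h1.mul h2).mul_const (ε + pbar2)
    have hprod : (ε + pbar1 - pbar2) * (ε - pbar1) * (ε + pbar2) ≠ 0 := by positivity
    have hd : HasDerivAt (fun s => kdv2H ε δ q1 q2 s pbar2)
        (ε * δ * ((1 * (ε - pbar1) + (ε + pbar1 - pbar2) * (-1)) * (ε + pbar2) /
          ((ε + pbar1 - pbar2) * (ε - pbar1) * (ε + pbar2)))) pbar1 := by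
      unfold kdv2H
      exact ((hg.log hprod).const_mul (ε * δ)).add_const _
    rw [hd.deriv, hqbar1]
    field_simp
    ring
  · have h1 : HasDerivAt (fun s : ℝ => ε + pbar1 - s) (-1) pbar2 := by
      simpa using (hasDerivAt_id pbar2).const_sub (ε + pbar1)
    have h2 : HasDerivAt (fun s : ℝ => ε + s) 1 pbar2 := by
      simpa using (hasDerivAt_id pbar2).const_add ε
    have hg : HasDerivAt (fun s => (ε + pbar1 - s) * ((ε - pbar1) * (ε + s)))
        ((-1) * ((ε - pbar1) * (ε + pbar2)) +
          (ε + pbar1 - pbar2) * (0 * (ε + pbar2) + (ε - pbar1) * 1)) pbar2 :=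
      h1.mul ((hasDerivAt_const pbar2 (ε - pbar1)).mul h2)
    have hprod : (ε + pbar1 - pbar2) * ((ε - pbar1) * (ε + pbar2)) ≠ 0 := by positivity
    have hd : HasDerivAt (fun s => kdv2H ε δ q1 q2 pbar1 s)
        (ε * δ * (((-1) * ((ε - pbar1) * (ε + pbar2)) +
          (ε + pbar1 - pbar2) * (0 * (ε + pbar2) + (ε - pbar1) * 1)) /
          ((ε + pbar1 - pbar2) * ((ε - pbar1) * (ε + pbar2))))) pbar2 := by
      unfold kdv2H
      simp only [mul_assoc]
      exact ((hg.log hprod).const_mul δ).const_mul ε |>.add_const _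
    rw [hd.deriv, hqbar2]
    field_simp
    ring
end
end

section
/- Let p, q, k ∈ ℂ and let u, ũ, û, û̃ ∈ ℂ satisfy the lattice KdV equation (p − q + û − ũ)(p + q − û̃ + u) = p² − q². Define the 2×2 matrix L(a; w, z) = [[a − w, 1],[k² − a² + (a − w)(a + z), a + z]]. Then the Lax compatibility (Zakharov–Shabat) condition holds for every k: L(p; û̃, û) · L(q; û, u) = L(q; û̃, ũ) · L(p; ũ, u). -/
noncomputable section

/-- The Lax matrix of the lattice KdV equation:
`L(a; w, z) = [[a − w, 1],[k² − a² + (a − w)(a + z), a + z]]`. -/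
def laxKdV (k a w z : ℂ) : Matrix (Fin 2) (Fin 2) ℂ :=
  !![a - w, 1;
     k ^ 2 - a ^ 2 + (a - w) * (a + z), a + z]

/-- If `u, ũ, û, û̃` satisfy the lattice KdV equation
`(p − q + û − ũ)(p + q − û̃ + u) = p² − q²`, then the Lax (Zakharov–Shabat)
compatibility condition `L(p; û̃, û)·L(q; û, u) = L(q; û̃, ũ)·L(p; ũ, u)` holds for
every value of the spectral parameter `k`. -/
theorem lattice_kdv_lax_compatibility (p q : ℂ) (u ut uh uth : ℂ)
    (h : (p - q + uh - ut) * (p + q - uth + u) = p ^ 2 - q ^ 2) :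
    ∀ k : ℂ, laxKdV k p uth uh * laxKdV k q uh u = laxKdV k q uth ut * laxKdV k p ut u := by
  intro k
  unfold laxKdV
  ext i j
  fin_cases i <;> fin_cases j <;>
    simp [Matrix.mul_apply, Fin.sum_univ_succ]
  · linear_combination -h
  · ring
  · linear_combination (-(ut + uh)) * h
  · linear_combination h
end
end

section
/- Let p, q, k ∈ ℂ and let v, ṽ, v̂, v̂̃ be nonzero complex numbers satisfying the lattice MKdV equation p·v·v̂ + q·v̂·v̂̃ = q·v·ṽ + p·ṽ·v̂̃. Define 𝔏(k; w, z) = [[p, w],[k²/z, p·w/z]] and 𝔐(k; w, z) = [[q, w],[k²/z, q·w/z]]. Then the Lax compatibility (Zakharov–Shabat) condition holds for every k: 𝔏(k; v̂̃, v̂) · 𝔐(k; v̂, v) = 𝔐(k; v̂̃, ṽ) · 𝔏(k; ṽ, v). -/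
noncomputable section

/-- The Lax matrix `𝔏(k; w, z) = [[p, w],[k²/z, p·w/z]]` of the lattice MKdV equation
(in the `n`-direction, with lattice parameter `p`). -/
def laxMKdVL (p k w z : ℂ) : Matrix (Fin 2) (Fin 2) ℂ :=
  !![p, w;
     k ^ 2 / z, p * w / z]

/-- The Lax matrix `𝔐(k; w, z) = [[q, w],[k²/z, q·w/z]]` of the lattice MKdV equation
(in the `m`-direction, with lattice parameter `q`). -/
def laxMKdVM (q k w z : ℂ) : Matrix (Fin 2) (Fin 2) ℂ :=
  !![q, w;
     k ^ 2 / z, q * w / z]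

/-- If the nonzero values `v, ṽ, v̂, v̂̃` satisfy the lattice MKdV equation
`p·v·v̂ + q·v̂·v̂̃ = q·v·ṽ + p·ṽ·v̂̃`, then the Lax (Zakharov–Shabat) compatibility
condition `𝔏(k; v̂̃, v̂)·𝔐(k; v̂, v) = 𝔐(k; v̂̃, ṽ)·𝔏(k; ṽ, v)` holds for every `k`. -/
theorem lattice_mkdv_lax_compatibility (p q : ℂ) (v vt vh vth : ℂ)
    (hv : v ≠ 0) (hvt : vt ≠ 0) (hvh : vh ≠ 0) (hvth : vth ≠ 0)
    (h : p * v * vh + q * vh * vth = q * v * vt + p * vt * vth) :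
    ∀ k : ℂ,
      laxMKdVL p k vth vh * laxMKdVM q k vh v = laxMKdVM q k vth vt * laxMKdVL p k vt v := by
  intro k
  unfold laxMKdVL laxMKdVM
  ext i j
  fin_cases i <;> fin_cases j <;>
    simp [Matrix.mul_apply, Fin.sum_univ_succ]
  · exact mul_comm p q
  · field_simp
    linear_combination h
  · field_simp
    linear_combination (-k ^ 2) * h
  · field_simp
end
end

section
/- Let ε, δ ∈ ℂ, set ω = εδ, and let x, y, x̄, ȳ : ℤ → ℂ be sequences with y_j ≠ 0 and x̄_j ≠ 0 for all j, satisfying the reduced KdV map relations x̄_j = x_j − ω/y_j + ω/y_{j−1} and ȳ_j = y_j + ω/x̄_j − ω/x̄_{j+1}. Define, for λ ∈ ℂ, the 2×2 matrices L_j(λ) = [[y_j, 1],[λ, 0]] · [[x_j, 1],[λ − ω, 0]], L̄_j(λ) = [[ȳ_j, 1],[λ, 0]] · [[x̄_j, 1],[λ − ω, 0]], and M_j(λ) = [[−ω/x̄_j, 1],[λ, −x̄_j]] · [[x_j − ω/y_j, 1],[λ, 0]]. Then the discrete Zakharov–Shabat equation L̄_j(λ) · M_j(λ) = M_{j+1}(λ)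 · L_j(λ) holds for all j ∈ ℤ and all λ ∈ ℂ. -/
set_option maxHeartbeats 1000000


noncomputable section

/-- The Lax matrix `L_j(λ) = [[y_j, 1],[λ, 0]]·[[x_j, 1],[λ − ω, 0]]` of the reduced
KdV mapping. -/
def kdvMapL (ω : ℂ) (x y : ℤ → ℂ) (j : ℤ) (lam : ℂ) : Matrix (Fin 2) (Fin 2) ℂ :=
  !![y j, 1; lam, 0] * !![x j, 1; lam - ω, 0]

/-- The Lax matrix `M_j(λ) = [[−ω/x̄_j, 1],[λ, −x̄_j]]·[[x_j − ω/y_j, 1],[λ, 0]]` of the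
reduced KdV mapping. -/
def kdvMapM (ω : ℂ) (x y xb : ℤ → ℂ) (j : ℤ) (lam : ℂ) : Matrix (Fin 2) (Fin 2) ℂ :=
  !![-ω / xb j, 1; lam, -xb j] * !![x j - ω / y j, 1; lam, 0]

/-- If the sequences `x, y, x̄, ȳ` satisfy the reduced KdV map relations
`x̄_j = x_j − ω/y_j + ω/y_{j−1}` and `ȳ_j = y_j + ω/x̄_j − ω/x̄_{j+1}` (with `ω = εδ`),
then the discrete Zakharov–Shabat equation `L̄_j(λ)·M_j(λ) = M_{j+1}(λ)·L_j(λ)` holds for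
all `j` and all `λ`. -/
theorem reduced_kdv_zakharov_shabat (ε δ : ℂ) (ω : ℂ) (hω : ω = ε * δ)
    (x y xb yb : ℤ → ℂ)
    (hy : ∀ j : ℤ, y j ≠ 0) (hxb : ∀ j : ℤ, xb j ≠ 0)
    (hx : ∀ j : ℤ, xb j = x j - ω / y j + ω / y (j - 1))
    (hyb : ∀ j : ℤ, yb j = y j + ω / xb j - ω / xb (j + 1)) :
    ∀ (j : ℤ) (lam : ℂ),
      kdvMapL ω xb yb j lam * kdvMapM ω x y xb j lam =
        kdvMapM ω x y xb (j + 1) lam * kdvMapL ω x y j lam := by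
  intro j lam
  have e1 : x j = xb j + ω / y j - ω / y (j - 1) := by rw [hx j]; ring
  have e2 : x (j + 1) = xb (j + 1) + ω / y (j + 1) - ω / y (j + 1 - 1) := by
    rw [hx (j + 1)]; ring
  have e3 := hyb j
  have hyj := hy j
  have hyj1 := hy (j - 1)
  have hyj2 := hy (j + 1)
  have hbj := hxb j
  have hbj1 := hxb (j + 1)
  have hs : j + 1 - 1 = j := by ring
  rw [hs] at e2
  simp only [kdvMapL, kdvMapM]
  ext i k
  fin_cases i <;> fin_cases k <;>
    · simp [Matrix.mul_apply, Fin.sum_univ_succ]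
      have f1 : x j - ω / y j = xb j - ω / y (j - 1) := by rw [hx j]; ring
      have f2 : x (j + 1) - ω / y (j + 1) = xb (j + 1) - ω / y j := by
        rw [hx (j + 1), hs]; ring
      try simp only [f1, f2]
      try simp only [e1, e2, e3]
      set a := y (j - 1) with ha
      set b := y j with hb
      set c := y (j + 1) with hc
      set p := xb j with hp
      set q := xb (j + 1) with hq
      clear_value a b c p q
      field_simp
      ring
end
end

section
/- Let ω, 𝓘₀, B₁, C₁ ∈ ℂ with ω ≠ 0 and B₁ ≠ 0, and let μ, μ̄, x̄, r, r̄ ∈ ℂ with μ ≠ 0, μ̄ ≠ 0, x̄ ≠ 0 and μ ≠ μ̄. Suppose the coupled genus-one discrete Dubrovin equations hold: (i) r/μ + r̄/μ̄ = 𝓘₀·(μ − μ̄)/(μ·μ̄) + 2B₁·(x̄/ω)·(μ − μ̄), and (ii) r̄/μ̄ − r/μ = 𝓘₀·(μ + μ̄)/(μ·μ̄) + 2B₁·x̄ − 2C₁·ω/x̄. Then the second-degree discrete Dubrovin equation holds: (μ − μ̄ − ω)·((r̄ − 𝓘₀)/μ̄)² − (μ − μ̄ + ω)·((r + 𝓘₀)/μ)²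 = (2ω/(μ·μ̄))·(r̄ − 𝓘₀)·(r + 𝓘₀) − 4B₁C₁·(μ − μ̄)². -/
noncomputable section

/-- Eliminating `x̄` from the coupled genus-one discrete Dubrovin equations yields the
second-degree discrete Dubrovin equation. -/
theorem genus_one_discrete_dubrovin (ω I0 B1 C1 : ℂ) (hω : ω ≠ 0) (hB1 : B1 ≠ 0)
    (μ μb xb r rb : ℂ) (hμ : μ ≠ 0) (hμb : μb ≠ 0) (hxb : xb ≠ 0) (hne : μ ≠ μb)
    (h1 : r / μ + rb / μb = I0 * ((μ - μb) / (μ * μb)) + 2 * B1 * (xb / ω) * (μ - μb))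
    (h2 : rb / μb - r / μ = I0 * ((μ + μb) / (μ * μb)) + 2 * B1 * xb - 2 * C1 * (ω / xb)) :
    (μ - μb - ω) * ((rb - I0) / μb) ^ 2 - (μ - μb + ω) * ((r + I0) / μ) ^ 2 =
      2 * ω / (μ * μb) * ((rb - I0) * (r + I0)) - 4 * B1 * C1 * (μ - μb) ^ 2 := by
  field_simp at h1 h2
  have key : (μ*μb*xb)*((μ - μb - ω) * (rb - I0)^2 * μ^2 - (μ - μb + ω) * (r + I0)^2 * μb^2
      - 2*ω*μ*μb*((rb - I0)*(r + I0)) + 4*B1*C1*(μ-μb)^2*μ^2*μb^2) = 0 := by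
    linear_combination μ*μb*(μ - μb)*((r+I0)*μb + (rb-I0)*μ) * h2
      - μ*μb*(xb*((r+I0)*μb + (rb-I0)*μ) + 2*C1*(μ-μb)*μ*μb) * h1
  have key2 := (mul_eq_zero.mp key).resolve_left
    (mul_ne_zero (mul_ne_zero hμ hμb) hxb)
  field_simp
  linear_combination key2
end
end
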